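/- arXiv:1204.5247 — 7 statements merged into one kernel-verified Lean document; each statement's English description precedes it below -/
import Mathlib

section
/- For every positive integer d, if n and m are positive integers with n ≤ m, then the Macaulay bound is monotone: (n_{(d)})^1_1 ≤ (m_{(d)})^1_1. -/
open scoped Classical

/-- Macaulay upper bound `(n_(d))^1_1`, computed via the greedy `d`-binomial expansion:
if `n = C(k_d,d) + C(k_{d-1},d-1) + ... + C(k_δ,δ)` with `k_d > ... > k_δ ≥ δ ≥ 1`,
then `mb n d = C(k_d+1,d+1) + C(k_{d-1}+1,d) + ... + C(k_δ+1,δ+1)`. -/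
def mb : ℕ → ℕ → ℕ
  | _, 0 => 0
  | n, d + 1 =>
    if n = 0 then 0 else
      let k := Nat.findGreatest (fun k => Nat.choose k (d + 1) ≤ n) (n + d + 1)
      Nat.choose (k + 1) (d + 2) + mb (n - Nat.choose k (d + 1)) d

lemma mb_zero (d : ℕ) : mb 0 d = 0 := by cases d <;> simp [mb]

lemma le_choose_self (m j : ℕ) (h1 : 1 ≤ j) (h2 : j < m) : m ≤ Nat.choose m j := by
  induction m generalizing j with
  | zero => omega
  | succ m ih =>
    rcases Nat.eq_or_lt_of_le h1 with h | h
    · simp [← h]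
    · obtain ⟨j, rfl⟩ : ∃ j', j = j' + 1 := ⟨j - 1, by omega⟩
      rw [Nat.choose_succ_succ]
      have h3 : m ≤ Nat.choose m j := ih j (by omega) (by omega)
      have h4 : 0 < Nat.choose m (j + 1) := Nat.choose_pos (by omega)
      simp only [Nat.succ_eq_add_one] at *
      omega

lemma choose_lt_choose (a b j : ℕ) (hj : 1 ≤ j) (hja : j ≤ a) (hab : a < b) :
    Nat.choose a j < Nat.choose b j := by
  have h1 : Nat.choose a j < Nat.choose (a + 1) j := by
    obtain ⟨j, rfl⟩ : ∃ j', j = j' + 1 := ⟨j - 1, by omega⟩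
    rw [Nat.choose_succ_succ]
    have := Nat.choose_pos (show j ≤ a by omega)
    simp only [Nat.succ_eq_add_one] at *
    omega
  exact lt_of_lt_of_le h1 (Nat.choose_le_choose j hab)

lemma pascal (a b : ℕ) : Nat.choose (a + 1) (b + 1) = Nat.choose a b + Nat.choose a (b + 1) := by
  rw [Nat.choose_succ_succ]

lemma mb_succ (d n : ℕ) (hn : 0 < n) :
    ∃ k, d + 1 ≤ k ∧ Nat.choose k (d + 1) ≤ n ∧ n < Nat.choose (k + 1) (d + 1) ∧
      mb n (d + 1) = Nat.choose (k + 1) (d + 2) + mb (n - Nat.choose k (d + 1)) d := by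
  have hPd : (fun k => Nat.choose k (d + 1) ≤ n) (d + 1) := by
    simpa [Nat.choose_self] using (show 1 ≤ n from hn)
  refine ⟨Nat.findGreatest (fun k => Nat.choose k (d + 1) ≤ n) (n + d + 1), ?_, ?_, ?_, ?_⟩
  · exact Nat.le_findGreatest (P := fun k => Nat.choose k (d + 1) ≤ n) (by omega) hPd
  · exact Nat.findGreatest_spec (P := fun k => Nat.choose k (d + 1) ≤ n) (m := d + 1)
      (by omega) hPd
  · have hle := Nat.findGreatest_le (P := fun k => Nat.choose k (d + 1) ≤ n) (n + d + 1)
    have hlt : Nat.findGreatest (fun k => Nat.choose k (d + 1) ≤ n) (n + d + 1) < n + d + 1 := by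
      rcases Nat.eq_or_lt_of_le hle with he | h
      · exfalso
        have hsp : Nat.choose (Nat.findGreatest (fun k => Nat.choose k (d + 1) ≤ n) (n + d + 1))
            (d + 1) ≤ n :=
          Nat.findGreatest_spec (P := fun k => Nat.choose k (d + 1) ≤ n) (m := d + 1)
            (by omega) hPd
        rw [he] at hsp
        have := le_choose_self (n + d + 1) (d + 1) (by omega) (by omega)
        omega
      · exact h
    have hng := Nat.findGreatest_is_greatest (P := fun k => Nat.choose k (d + 1) ≤ n)
      (n := n + d + 1)
      (k := Nat.findGreatest (fun k => Nat.choose k (d + 1) ≤ n) (n + d + 1) + 1)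
      (by omega) (by omega)
    exact Nat.lt_of_not_le (by simpa using hng)
  · rw [mb]
    simp [Nat.pos_iff_ne_zero.mp hn]

lemma mono_and_B (d : ℕ) :
    (∀ n m, n ≤ m → mb n d ≤ mb m d) ∧
    (∀ k r, d ≤ k → r ≤ Nat.choose k d → mb r d ≤ Nat.choose (k + 1) (d + 1)) := by
  induction d with
  | zero => simp [mb]
  | succ d ih =>
    obtain ⟨ihMono, ihB⟩ := ih
    have hB : ∀ k r, d + 1 ≤ k → r ≤ Nat.choose k (d + 1) →
        mb r (d + 1) ≤ Nat.choose (k + 1) (d + 2) := by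
      intro k r hk hr
      rcases Nat.eq_zero_or_pos r with rfl | hr0
      · simp [mb_zero]
      obtain ⟨j, hj1, hj2, hj3, hjeq⟩ := mb_succ d r hr0
      rw [hjeq]
      have hjk : j ≤ k := by
        by_contra h
        have := choose_lt_choose k j (d + 1) (by omega) hk (by omega)
        omega
      rcases Nat.eq_or_lt_of_le hjk with rfl | hjk'
      · have hre : r = Nat.choose j (d + 1) := le_antisymm hr hj2
        rw [hre]
        simp [mb_zero]
      · have hps := pascal j d
        have hr' : r - Nat.choose j (d + 1) ≤ Nat.choose j d := by omega
        have hmbr : mb (r - Nat.choose j (d + 1)) d ≤ Nat.choose (j + 1) (d + 1) :=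
          ihB j _ (by omega) hr'
        have hpas : Nat.choose (j + 2) (d + 2) =
            Nat.choose (j + 1) (d + 1) + Nat.choose (j + 1) (d + 2) := pascal (j + 1) (d + 1)
        have hmono : Nat.choose (j + 2) (d + 2) ≤ Nat.choose (k + 1) (d + 2) :=
          Nat.choose_le_choose _ (by omega)
        omega
    have hstep : ∀ n, mb n (d + 1) ≤ mb (n + 1) (d + 1) := by
      intro n
      rcases Nat.eq_zero_or_pos n with rfl | hn0
      · simp [mb_zero]
      obtain ⟨k, h1, h2, h3, heq⟩ := mb_succ d n hn0
      obtain ⟨k', h1', h2', h3', heq'⟩ := mb_succ d (n + 1) (by omega)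
      rw [heq, heq']
      have hkk : k ≤ k' := by
        by_contra h
        have := Nat.choose_le_choose (d + 1) (show k' + 1 ≤ k by omega)
        omega
      have hkk2 : k' ≤ k + 1 := by
        by_contra h
        have := choose_lt_choose (k + 1) k' (d + 1) (by omega) (by omega) (by omega)
        omega
      rcases Nat.eq_or_lt_of_le hkk with rfl | hlt
      · have := ihMono (n - Nat.choose k (d + 1)) (n + 1 - Nat.choose k (d + 1)) (by omega)
        omega
      · have hkeq : k' = k + 1 := by omega
        subst hkeq
        have hps := pascal k d
        have hn1 : n + 1 = Nat.choose (k + 1) (d + 1) := by omega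
        have hr : n - Nat.choose k (d + 1) ≤ Nat.choose k d := by omega
        have hmbr : mb (n - Nat.choose k (d + 1)) d ≤ Nat.choose (k + 1) (d + 1) :=
          ihB k _ (by omega) hr
        have hz : n + 1 - Nat.choose (k + 1) (d + 1) = 0 := by omega
        rw [hz, mb_zero]
        have hpas : Nat.choose (k + 2) (d + 2) =
            Nat.choose (k + 1) (d + 1) + Nat.choose (k + 1) (d + 2) := pascal (k + 1) (d + 1)
        have e1 : Nat.choose (k + 1 + 1) (d + 2) = Nat.choose (k + 2) (d + 2) := rfl
        have e2 : Nat.choose (k + 1 + 1) (d + 1) = Nat.choose (k + 2) (d + 1) := rfl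
        omega
    refine ⟨?_, hB⟩
    intro n m h
    induction h with
    | refl => exact le_refl _
    | step h ih => exact le_trans ih (hstep _)

/-- For every positive integer `d`, the Macaulay bound is monotone:
if `0 < n ≤ m` then `(n_(d))^1_1 ≤ (m_(d))^1_1`. -/
theorem stmt1 (d : ℕ) (hd : 1 ≤ d) (n m : ℕ) (hn : 0 < n) (hnm : n ≤ m) :
    mb n d ≤ mb m d :=
  (mono_and_B d).1 n m hnm
end

section
/- Let X be a pure monomial order ideal with h-vector (h_0=1, h_1, ..., h_e). Then h_i ≤ h_j whenever 0 ≤ i ≤ j ≤ e−i. In particular, h is flawless (h_i ≤ h_{e−i} for 0 ≤ i ≤ ⌊e/2⌋) and the first half 1 = h_0 ≤ h_1 ≤ ... ≤ h_{⌊e/2⌋} is nondecreasing. -/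
open scoped Classical

/-- total degree of a monomial, recorded as an exponent vector -/
def mdeg {r : ℕ} (m : Fin r → ℕ) : ℕ := ∑ i, m i

/-- a monomial order ideal: a finite nonempty set of monomials closed under divisibility -/
def IsOrderIdeal {r : ℕ} (X : Finset (Fin r → ℕ)) : Prop :=
  X.Nonempty ∧ ∀ m ∈ X, ∀ m' : Fin r → ℕ, m' ≤ m → m' ∈ X

/-- the maximal monomials of `X` under divisibility -/
noncomputable def maxMons {r : ℕ} (X : Finset (Fin r → ℕ)) : Finset (Fin r → ℕ) :=
  X.filter fun m => ∀ m' ∈ X, m ≤ m' → m' = m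

/-- `X` is pure of socle degree `e`: all maximal monomials have degree `e` -/
def IsPure {r : ℕ} (X : Finset (Fin r → ℕ)) (e : ℕ) : Prop :=
  ∀ m ∈ maxMons X, mdeg m = e

/-- the `h`-vector of `X`: the number of monomials of each degree -/
noncomputable def hVec {r : ℕ} (X : Finset (Fin r → ℕ)) (i : ℕ) : ℕ :=
  (X.filter fun m => mdeg m = i).card

/-- a finite list is a pure `O`-sequence if it is the `h`-vector of a pure monomial
order ideal (of socle degree `length - 1`) -/
def IsPureOSeqList (h : List ℕ) : Prop :=
  ∃ (r : ℕ) (X : Finset (Fin r → ℕ)), IsOrderIdeal X ∧ IsPure X (h.length - 1) ∧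
    ∀ i, hVec X i = h.getD i 0

namespace Hibi

lemma mdeg_mono {r : ℕ} {m m' : Fin r → ℕ} (h : m ≤ m') : mdeg m ≤ mdeg m' :=
  Finset.sum_le_sum fun i _ => h i

lemma eq_of_le_of_mdeg_le {r : ℕ} {m m' : Fin r → ℕ} (h : m ≤ m')
    (hd : mdeg m' ≤ mdeg m) : m = m' := by
  have hsum : ∑ i, m i = ∑ i, m' i := le_antisymm (mdeg_mono h) hd
  funext i
  exact (Finset.sum_eq_sum_iff_of_le fun i _ => h i).mp hsum i (Finset.mem_univ i)

lemma mdeg_init_last {r : ℕ} (m : Fin (r + 1) → ℕ) :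
    mdeg m = mdeg (Fin.init m) + m (Fin.last r) := by
  simp [mdeg, Fin.sum_univ_castSucc, Fin.init]

lemma le_of_init_last {r : ℕ} {m m' : Fin (r + 1) → ℕ}
    (h1 : Fin.init m ≤ Fin.init m') (h2 : m (Fin.last r) ≤ m' (Fin.last r)) : m ≤ m' := by
  intro i
  induction i using Fin.lastCases with
  | last => exact h2
  | cast i => exact h1 i

lemma exists_max {r : ℕ} {X : Finset (Fin r → ℕ)} (hX : IsOrderIdeal X) {m : Fin r → ℕ}
    (hm : m ∈ X) : ∃ P ∈ maxMons X, m ≤ P := by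
  have hne : (X.filter fun z => m ≤ z).Nonempty := ⟨m, by simp [hm]⟩
  obtain ⟨P, hP, hmax⟩ := Finset.exists_max_image _ mdeg hne
  rw [Finset.mem_filter] at hP
  refine ⟨P, ?_, hP.2⟩
  rw [maxMons, Finset.mem_filter]
  refine ⟨hP.1, fun m'' hm'' hle => ?_⟩
  exact (eq_of_le_of_mdeg_le hle
    (hmax m'' (Finset.mem_filter.mpr ⟨hm'', hP.2.trans hle⟩))).symm


lemma snoc_le_snoc {r : ℕ} {a a' : Fin r → ℕ} {c c' : ℕ} (h1 : a ≤ a') (h2 : c ≤ c') :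
    (Fin.snoc a c : Fin (r + 1) → ℕ) ≤ Fin.snoc a' c' := by
  apply le_of_init_last <;> simp [Fin.init_snoc, Fin.snoc_last] <;> assumption

def slo (b x y : ℕ) : ℕ := if x + y ≤ b then x else b - y
def gX (b s κ : ℕ) : ℕ := if κ ≤ b then s else κ + s - b
def gY (b s κ : ℕ) : ℕ := if κ ≤ b then κ - s else b - s

lemma slo_le_left (b x y : ℕ) (hy : y ≤ b) : slo b x y ≤ x := by unfold slo; split <;> omega
lemma slo_le_right (b x y : ℕ) : slo b x y ≤ b := by unfold slo; split <;> omega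
lemma g_sum (b s κ : ℕ) (hs : s ≤ b) (hκ : s ≤ κ) : gX b s κ + gY b s κ = κ := by
  unfold gX gY; split <;> omega
lemma gY_le (b s κ : ℕ) : gY b s κ ≤ b := by unfold gY; split <;> omega
lemma gX_ge (b s κ : ℕ) (hκ : s ≤ κ) : s ≤ gX b s κ := by unfold gX; split <;> omega
lemma gX_ub (b s κ t M : ℕ) (h1 : s + t ≤ M) (h2 : κ + s + t ≤ M + b) :
    gX b s κ + t ≤ M := by unfold gX; split <;> omega
lemma slo_g (b s κ : ℕ) (hs : s ≤ b) (hκ : s ≤ κ) :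
    slo b (gX b s κ) (gY b s κ) = s := by unfold slo gX gY; split_ifs <;> omega
lemma gX_mono (b s κ κ' : ℕ) (hs : s ≤ b) (h : κ ≤ κ') : gX b s κ ≤ gX b s κ' := by
  unfold gX; split_ifs <;> omega
lemma gY_mono (b s κ κ' : ℕ) (hκ : κ ≤ b → s ≤ κ) (h : κ ≤ κ') : gY b s κ ≤ gY b s κ' := by
  unfold gY; split_ifs <;> omega
lemma gX_self (b x y : ℕ) (hy : y ≤ b) : gX b (slo b x y) (x + y) = x := by
  unfold slo gX; split_ifs <;> omega
lemma gY_self (b x y : ℕ) (hy : y ≤ b) : gY b (slo b x y) (x + y) = y := by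
  unfold slo gY; split_ifs <;> omega

structure IsSCD {r : ℕ} (P : Fin r → ℕ) (F : (Fin r → ℕ) → ℕ → (Fin r → ℕ))
    (lo : (Fin r → ℕ) → ℕ) : Prop where
  lo_le : ∀ m, m ≤ P → lo m ≤ mdeg m
  le_hi : ∀ m, m ≤ P → mdeg m + lo m ≤ mdeg P
  F_self : ∀ m, m ≤ P → F m (mdeg m) = m
  F_le : ∀ m, m ≤ P → ∀ k, lo m ≤ k → k + lo m ≤ mdeg P → F m k ≤ P
  F_deg : ∀ m, m ≤ P → ∀ k, lo m ≤ k → k + lo m ≤ mdeg P → mdeg (F m k) = k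
  F_lo : ∀ m, m ≤ P → ∀ k, lo m ≤ k → k + lo m ≤ mdeg P → lo (F m k) = lo m
  F_mono : ∀ m, m ≤ P → ∀ k k', lo m ≤ k → k ≤ k' → k' + lo m ≤ mdeg P →
    F m k ≤ F m k'
  F_compat : ∀ m, m ≤ P → ∀ k, lo m ≤ k → k + lo m ≤ mdeg P →
    ∀ k', lo m ≤ k' → k' + lo m ≤ mdeg P → F (F m k) k' = F m k'

def stepLo {r : ℕ} (lo₀ : (Fin r → ℕ) → ℕ) (b : ℕ) (m : Fin (r + 1) → ℕ) : ℕ :=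
  lo₀ (Fin.init m) + slo b (mdeg (Fin.init m) - lo₀ (Fin.init m)) (m (Fin.last r))

def stepF {r : ℕ} (F₀ : (Fin r → ℕ) → ℕ → (Fin r → ℕ)) (lo₀ : (Fin r → ℕ) → ℕ) (b : ℕ)
    (m : Fin (r + 1) → ℕ) (k : ℕ) : Fin (r + 1) → ℕ :=
  Fin.snoc
    (F₀ (Fin.init m) (lo₀ (Fin.init m) +
      gX b (slo b (mdeg (Fin.init m) - lo₀ (Fin.init m)) (m (Fin.last r))) (k - lo₀ (Fin.init m))))
    (gY b (slo b (mdeg (Fin.init m) - lo₀ (Fin.init m)) (m (Fin.last r))) (k - lo₀ (Fin.init m)))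

theorem scd_exists : ∀ {r : ℕ} (P : Fin r → ℕ), ∃ F lo, IsSCD P F lo := by
  intro r
  induction r with
  | zero =>
    intro P
    have hdeg : ∀ m : Fin 0 → ℕ, mdeg m = 0 := fun m => by simp [mdeg]
    have hle : ∀ m m' : Fin 0 → ℕ, m ≤ m' := fun m m' i => i.elim0
    exact ⟨fun m _ => m, fun _ => 0,
      fun m _ => Nat.zero_le _,
      fun m _ => by simp [hdeg],
      fun m _ => rfl,
      fun m _ k _ _ => hle _ _,
      fun m _ k _ hk => by simp [hdeg] at hk ⊢; omega,
      fun m _ k _ _ => rfl,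
      fun m _ k k' _ _ _ => le_refl _,
      fun m _ k _ _ k' _ _ => rfl⟩
  | succ r ih =>
    intro P
    obtain ⟨F₀, lo₀, h₀⟩ := ih (Fin.init P)
    set b := P (Fin.last r) with hbdef
    set M : ℕ := mdeg (Fin.init P) with hMdef
    have hMP : mdeg P = M + b := mdeg_init_last P
    -- master facts, for m ≤ P and k in the window of m
    have master : ∀ m : Fin (r + 1) → ℕ, m ≤ P → ∀ k : ℕ,
        stepLo lo₀ b m ≤ k → k + stepLo lo₀ b m ≤ mdeg P →
        mdeg (stepF F₀ lo₀ b m k) = k ∧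
        stepF F₀ lo₀ b m k ≤ P ∧
        stepLo lo₀ b (stepF F₀ lo₀ b m k) = stepLo lo₀ b m ∧
        (∀ k', k ≤ k' → k' + stepLo lo₀ b m ≤ mdeg P →
          stepF F₀ lo₀ b m k ≤ stepF F₀ lo₀ b m k') ∧
        (∀ k', stepLo lo₀ b m ≤ k' → k' + stepLo lo₀ b m ≤ mdeg P →
          stepF F₀ lo₀ b (stepF F₀ lo₀ b m k) k' = stepF F₀ lo₀ b m k') := by
      intro m hm k hk1 hk2
      set q : Fin r → ℕ := Fin.init m with hqdef
      have hqP : q ≤ Fin.init P := fun i => hm i.castSucc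
      set u : ℕ := lo₀ q with hudef
      set x : ℕ := mdeg q - u with hxdef
      set y : ℕ := m (Fin.last r) with hydef
      have hyb : y ≤ b := hm (Fin.last r)
      set s : ℕ := slo b x y with hsdef
      set κ : ℕ := k - u with hκdef
      set gx : ℕ := gX b s κ with hgxdef
      set gy : ℕ := gY b s κ with hgydef
      have hstep : stepF F₀ lo₀ b m k = Fin.snoc (F₀ q (u + gx)) gy := rfl
      have hlo : stepLo lo₀ b m = u + s := rfl
      have hu : u ≤ mdeg q := h₀.lo_le q hqP
      have hxu : mdeg q + u ≤ M := h₀.le_hi q hqP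
      have hx : mdeg q = u + x := by omega
      have hsx : s ≤ x := slo_le_left b x y hyb
      have hsb : s ≤ b := slo_le_right b x y
      have hk1' : u + s ≤ k := by rw [hlo] at hk1; exact hk1
      have hk2' : k + (u + s) ≤ M + b := by rw [hlo, hMP] at hk2; exact hk2
      have hκs : s ≤ κ := by omega
      have hκk : κ + u = k := by omega
      have hκM : κ + s + 2 * u ≤ M + b := by omega
      have hgsum : gx + gy = κ := g_sum b s κ hsb hκs
      have hwin1 : u ≤ u + gx := Nat.le_add_right _ _
      have hwin2 : (u + gx) + u ≤ M := by
        have := gX_ub b s κ (2 * u) M (by omega) hκM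
        omega
      have hFdeg : mdeg (F₀ q (u + gx)) = u + gx := h₀.F_deg q hqP _ hwin1 hwin2
      have hFlo : lo₀ (F₀ q (u + gx)) = u := h₀.F_lo q hqP _ hwin1 hwin2
      have hFle : F₀ q (u + gx) ≤ Fin.init P := h₀.F_le q hqP _ hwin1 hwin2
      refine ⟨?_, ?_, ?_, ?_, ?_⟩
      · -- degree
        rw [hstep, mdeg_init_last]
        simp only [Fin.init_snoc, Fin.snoc_last]
        rw [hFdeg]; omega
      · -- ≤ P
        rw [hstep]
        have : (Fin.snoc (F₀ q (u + gx)) gy : Fin (r+1) → ℕ) ≤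
            Fin.snoc (Fin.init P) b := snoc_le_snoc hFle (gY_le b s κ)
        rwa [hbdef, Fin.snoc_init_self] at this
      · -- lo preserved
        rw [hstep]
        simp only [stepLo, Fin.init_snoc, Fin.snoc_last, hFdeg, hFlo]
        congr 1
        have h1 : u + gx - u = gx := by omega
        rw [h1, hgxdef, hgydef, slo_g b s κ hsb hκs]
      · -- monotone
        intro k' hkk' hk2''
        have hk2'' : k' + (u + s) ≤ M + b := by rw [hlo, hMP] at hk2''; exact hk2''
        set κ' : ℕ := k' - u with hκ'def
        have hκκ' : κ ≤ κ' := by omega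
        rw [hstep]
        have hstep' : stepF F₀ lo₀ b m k' = Fin.snoc (F₀ q (u + gX b s κ')) (gY b s κ') := rfl
        rw [hstep']
        refine snoc_le_snoc ?_ (gY_mono b s κ κ' (fun _ => hκs) hκκ')
        refine h₀.F_mono q hqP _ _ hwin1 (by have := gX_mono b s κ κ' hsb hκκ'; omega) ?_
        have := gX_ub b s κ' (2 * u) M (by omega) (by omega)
        omega
      · -- compat
        intro k' hk1'' hk2''
        have hk1'' : u + s ≤ k' := by rw [hlo] at hk1''; exact hk1''
        have hk2'' : k' + (u + s) ≤ M + b := by rw [hlo, hMP] at hk2''; exact hk2''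
        set κ' : ℕ := k' - u with hκ'def
        have hκ's : s ≤ κ' := by omega
        have hwin2' : (u + gX b s κ') + u ≤ M := by
          have := gX_ub b s κ' (2 * u) M (by omega) (by omega)
          omega
        have hstep' : stepF F₀ lo₀ b m k' = Fin.snoc (F₀ q (u + gX b s κ')) (gY b s κ') := rfl
        rw [hstep, hstep']
        simp only [stepF, Fin.init_snoc, Fin.snoc_last, hFdeg, hFlo]
        have hgg : u + gx - u = gx := by omega
        rw [hgg, hgxdef, hgydef, slo_g b s κ hsb hκs, ← hκ'def]
        rw [h₀.F_compat q hqP _ hwin1 hwin2 _ (Nat.le_add_right _ _) hwin2']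
    refine ⟨stepF F₀ lo₀ b, stepLo lo₀ b, ?_, ?_, ?_, ?_, ?_, ?_, ?_, ?_⟩
    · -- lo_le
      intro m hm
      have hqP : Fin.init m ≤ Fin.init P := fun i => hm i.castSucc
      have hu := h₀.lo_le _ hqP
      have := slo_le_left b (mdeg (Fin.init m) - lo₀ (Fin.init m)) (m (Fin.last r))
        (hm (Fin.last r))
      rw [mdeg_init_last m]
      show lo₀ (Fin.init m) + _ ≤ _
      omega
    · -- le_hi
      intro m hm
      have hqP : Fin.init m ≤ Fin.init P := fun i => hm i.castSucc
      have hu := h₀.lo_le _ hqP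
      have hxu := h₀.le_hi _ hqP
      have hyb : m (Fin.last r) ≤ b := hm (Fin.last r)
      rw [mdeg_init_last m, hMP]
      show _ + (lo₀ (Fin.init m) + slo b _ _) ≤ _
      have hslo : slo b (mdeg (Fin.init m) - lo₀ (Fin.init m)) (m (Fin.last r)) =
          if mdeg (Fin.init m) - lo₀ (Fin.init m) + m (Fin.last r) ≤ b
          then mdeg (Fin.init m) - lo₀ (Fin.init m) else b - m (Fin.last r) := rfl
      rw [hslo]; split <;> omega
    · -- F_self
      intro m hm
      have hqP : Fin.init m ≤ Fin.init P := fun i => hm i.castSucc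
      have hu := h₀.lo_le _ hqP
      have hyb : m (Fin.last r) ≤ b := hm (Fin.last r)
      have hκ : mdeg m - lo₀ (Fin.init m) =
          (mdeg (Fin.init m) - lo₀ (Fin.init m)) + m (Fin.last r) := by
        rw [mdeg_init_last m]; omega
      show Fin.snoc (F₀ (Fin.init m) _) _ = m
      rw [hκ, gX_self _ _ _ hyb, gY_self _ _ _ hyb]
      have : lo₀ (Fin.init m) + (mdeg (Fin.init m) - lo₀ (Fin.init m)) = mdeg (Fin.init m) := by
        omega
      rw [this, h₀.F_self _ hqP, Fin.snoc_init_self]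
    · exact fun m hm k hk1 hk2 => (master m hm k hk1 hk2).2.1
    · exact fun m hm k hk1 hk2 => (master m hm k hk1 hk2).1
    · exact fun m hm k hk1 hk2 => (master m hm k hk1 hk2).2.2.1
    · exact fun m hm k k' hk1 hkk' hk2 =>
        (master m hm k hk1 (by omega)).2.2.2.1 k' hkk' hk2
    · exact fun m hm k hk1 hk2 k' hk1' hk2' =>
        (master m hm k hk1 hk2).2.2.2.2 k' hk1' hk2'


theorem key_injection {r : ℕ} (P : Fin r → ℕ) (i j : ℕ) (hij : i ≤ j)
    (hije : i + j ≤ mdeg P) :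
    ∃ g : (Fin r → ℕ) → (Fin r → ℕ),
      (∀ m, m ≤ P → mdeg m = i → (m ≤ g m ∧ g m ≤ P ∧ mdeg (g m) = j)) ∧
      (∀ m m', m ≤ P → mdeg m = i → m' ≤ P → mdeg m' = i → g m = g m' → m = m') := by
  obtain ⟨F, lo, h⟩ := scd_exists P
  refine ⟨fun m => F m j, ?_, ?_⟩
  · intro m hm hdeg
    have hlo : lo m ≤ i := hdeg ▸ h.lo_le m hm
    refine ⟨?_, h.F_le m hm j (by omega) (by omega), h.F_deg m hm j (by omega) (by omega)⟩
    have := h.F_mono m hm (mdeg m) j (h.lo_le m hm) (by omega) (by omega)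
    rwa [h.F_self m hm] at this
  · intro m m' hm hdm hm' hdm' hgeq
    have hlo : lo m ≤ i := hdm ▸ h.lo_le m hm
    have hlo' : lo m' ≤ i := hdm' ▸ h.lo_le m' hm'
    have h1 : F (F m j) i = m := by
      rw [h.F_compat m hm j (by omega) (by omega) i (by omega) (by omega)]
      rw [← hdm, h.F_self m hm]
    have h2 : F (F m' j) i = m' := by
      rw [h.F_compat m' hm' j (by omega) (by omega) i (by omega) (by omega)]
      rw [← hdm', h.F_self m' hm']
    simp only [] at hgeq
    rw [← h1, show F m j = F m' j from hgeq, h2]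


theorem hVec_le {r : ℕ} (X : Finset (Fin r → ℕ)) (e : ℕ)
    (hX : IsOrderIdeal X) (hpure : IsPure X e) (i j : ℕ) (hij : i ≤ j)
    (hije : i + j ≤ e) : hVec X i ≤ hVec X j := by
  classical
  set R := MvPolynomial ((Fin r → ℕ) × (Fin r → ℕ)) ℚ with hRdef
  set K := FractionRing R with hKdef
  set A : Finset (Fin r → ℕ) := X.filter fun m => mdeg m = i with hAdef
  set B : Finset (Fin r → ℕ) := X.filter fun m => mdeg m = j with hBdef
  have hgoal : hVec X i = A.card := rfl
  have hgoal' : hVec X j = B.card := rfl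
  rw [hgoal, hgoal']
  set v : (Fin r → ℕ) × (Fin r → ℕ) → K := fun p => algebraMap R K (MvPolynomial.X p)
    with hvdef
  set MM : Matrix ↥B ↥A K := fun n m =>
    if (m : Fin r → ℕ) ≤ (n : Fin r → ℕ) then v ((m : Fin r → ℕ), (n : Fin r → ℕ)) else 0
    with hMMdef
  -- injectivity of the mulVec map
  have hker : ∀ c : ↥A → K, MM.mulVec c = 0 → c = 0 := by
    intro c hc
    funext m0
    -- data about m0
    have hm0A : (m0 : Fin r → ℕ) ∈ A := m0.2
    have hm0X : (m0 : Fin r → ℕ) ∈ X := (Finset.mem_filter.mp hm0A).1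
    have hm0d : mdeg (m0 : Fin r → ℕ) = i := (Finset.mem_filter.mp hm0A).2
    obtain ⟨P, hPmax, hm0P⟩ := exists_max hX hm0X
    have hPX : P ∈ X := (Finset.mem_filter.mp hPmax).1
    have hPe : mdeg P = e := hpure P hPmax
    obtain ⟨g, hg, ginj⟩ := key_injection P i j hij (by omega)
    set A'' : Finset (Fin r → ℕ) := A.filter (fun z => z ≤ P) with hA''def
    have hm0A'' : (m0 : Fin r → ℕ) ∈ A'' := Finset.mem_filter.mpr ⟨hm0A, hm0P⟩
    have hmemA'' : ∀ z ∈ A'', z ≤ P ∧ mdeg z = i := fun z hz =>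
      ⟨(Finset.mem_filter.mp hz).2, (Finset.mem_filter.mp ((Finset.mem_filter.mp hz).1)).2⟩
    have hgB : ∀ z ∈ A'', g z ∈ B := by
      intro z hz
      obtain ⟨hzP, hzd⟩ := hmemA'' z hz
      obtain ⟨_, hgP, hgd⟩ := hg z hzP hzd
      exact Finset.mem_filter.mpr ⟨hX.2 P hPX _ hgP, hgd⟩
    -- value function extended by 0
    set cval : (Fin r → ℕ) → K := fun z => if hz : z ∈ A then c ⟨z, hz⟩ else 0 with hcvaldef
    -- the square matrix over R
    set D₀ : Matrix ↥A'' ↥A'' R := fun m' m =>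
      if (m : Fin r → ℕ) ≤ g (m' : Fin r → ℕ)
      then MvPolynomial.X ((m : Fin r → ℕ), g (m' : Fin r → ℕ)) else 0 with hD₀def
    set D : Matrix ↥A'' ↥A'' K := D₀.map (algebraMap R K) with hDdef
    set c' : ↥A'' → K := fun z => cval (z : Fin r → ℕ) with hc'def
    -- D.mulVec c' = 0
    have hDc : D.mulVec c' = 0 := by
      funext m'
      obtain ⟨hm'P, hm'd⟩ := hmemA'' _ m'.2
      obtain ⟨hm'le, hgP, hgd⟩ := hg _ hm'P hm'd
      have hrow := congrFun hc ⟨g (m' : Fin r → ℕ), hgB _ m'.2⟩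
      simp only [Matrix.mulVec, dotProduct, Pi.zero_apply] at hrow ⊢
      have hsum : ∀ m : ↥A, MM ⟨g (m' : Fin r → ℕ), hgB _ m'.2⟩ m * c m =
          (if (m : Fin r → ℕ) ≤ g (m' : Fin r → ℕ)
           then v ((m : Fin r → ℕ), g (m' : Fin r → ℕ)) else 0) * cval (m : Fin r → ℕ) := by
        intro m
        rw [hMMdef]
        congr 1
        rw [hcvaldef]
        simp only [m.2, dif_pos]
      rw [Finset.sum_congr rfl (fun m _ => hsum m)] at hrow
      have hArw : ∑ m : ↥A, (if (m : Fin r → ℕ) ≤ g (m' : Fin r → ℕ)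
           then v ((m : Fin r → ℕ), g (m' : Fin r → ℕ)) else 0) * cval (m : Fin r → ℕ)
          = ∑ z ∈ A, (if z ≤ g (m' : Fin r → ℕ)
           then v (z, g (m' : Fin r → ℕ)) else 0) * cval z :=
        Finset.sum_coe_sort A (fun z => (if z ≤ g (m' : Fin r → ℕ)
           then v (z, g (m' : Fin r → ℕ)) else 0) * cval z)
      rw [hArw] at hrow
      have hsub : ∑ z ∈ A'', (if z ≤ g (m' : Fin r → ℕ)
           then v (z, g (m' : Fin r → ℕ)) else 0) * cval z
          = ∑ z ∈ A, (if z ≤ g (m' : Fin r → ℕ)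
           then v (z, g (m' : Fin r → ℕ)) else 0) * cval z := by
        apply Finset.sum_subset (Finset.filter_subset _ _)
        intro z hzA hznot
        have : ¬ z ≤ g (m' : Fin r → ℕ) := by
          intro hle
          exact hznot (Finset.mem_filter.mpr ⟨hzA, hle.trans hgP⟩)
        rw [if_neg this, zero_mul]
      have hfin : ∑ m : ↥A'', D m' m * c' m
          = ∑ z ∈ A'', (if z ≤ g (m' : Fin r → ℕ)
           then v (z, g (m' : Fin r → ℕ)) else 0) * cval z := by
        rw [← Finset.sum_coe_sort A'' (fun z => (if z ≤ g (m' : Fin r → ℕ)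
           then v (z, g (m' : Fin r → ℕ)) else 0) * cval z)]
        apply Finset.sum_congr rfl
        intro m _
        rw [hDdef, Matrix.map_apply, hD₀def, hc'def]
        beta_reduce
        congr 1
        split
        · rfl
        · exact map_zero _
      rw [hfin, hsub, hrow]
    -- determinant of D₀ is nonzero, via evaluation
    have hdet₀ : D₀.det ≠ 0 := by
      intro h0
      set w : (Fin r → ℕ) × (Fin r → ℕ) → ℚ := fun p => if p.2 = g p.1 then 1 else 0 with hwdef
      have hψ := (MvPolynomial.eval w).map_det D₀
      rw [h0, map_zero, RingHom.mapMatrix_apply] at hψ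
      have hone : D₀.map (MvPolynomial.eval w) = 1 := by
        funext m' m
        rw [Matrix.map_apply]
        simp only [hD₀def]
        by_cases hmm : m' = m
        · subst hmm
          obtain ⟨hm'P, hm'd⟩ := hmemA'' _ m'.2
          obtain ⟨hm'le, _, _⟩ := hg _ hm'P hm'd
          rw [if_pos hm'le, MvPolynomial.eval_X, hwdef]
          simp [Matrix.one_apply]
        · have hgg : ¬ g (m' : Fin r → ℕ) = g (m : Fin r → ℕ) := by
            intro hgeq
            obtain ⟨hmP, hmd⟩ := hmemA'' _ m.2
            obtain ⟨hm'P, hm'd⟩ := hmemA'' _ m'.2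
            exact hmm (Subtype.ext (ginj _ _ hm'P hm'd hmP hmd hgeq))
          rw [Matrix.one_apply_ne hmm]
          split
          · rw [MvPolynomial.eval_X]
            simp [hwdef, hgg]
          · exact map_zero _
      rw [hone, Matrix.det_one] at hψ
      exact one_ne_zero hψ.symm
    have hdetK : D.det ≠ 0 := by
      rw [hDdef, ← RingHom.mapMatrix_apply, ← RingHom.map_det]
      intro h0
      apply hdet₀
      apply IsFractionRing.injective R K
      rw [h0, map_zero]
    -- conclude c' = 0
    have hc'0 : c' = 0 := by
      have h1 : D⁻¹.mulVec (D.mulVec c') = c' := by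
        rw [Matrix.mulVec_mulVec, Matrix.nonsing_inv_mul _ (isUnit_iff_ne_zero.mpr hdetK),
          Matrix.one_mulVec]
      rw [hDc, Matrix.mulVec_zero] at h1
      exact h1.symm
    have := congrFun hc'0 ⟨(m0 : Fin r → ℕ), hm0A''⟩
    rw [hc'def] at this
    simp only [hcvaldef, Pi.zero_apply] at this
    rw [dif_pos hm0A] at this
    rw [Pi.zero_apply]
    rw [← this]
  -- from injectivity to cardinalities
  have hinj : Function.Injective MM.mulVecLin := by
    intro a b hab
    have : MM.mulVec (a - b) = 0 := by
      have := sub_eq_zero_of_eq hab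
      rwa [← map_sub, Matrix.mulVecLin_apply] at this
    have := hker _ this
    exact sub_eq_zero.mp this
  have hfr := LinearMap.finrank_le_finrank_of_injective hinj
  rw [Module.finrank_pi, Module.finrank_pi, Fintype.card_coe, Fintype.card_coe] at hfr
  exact hfr


end Hibi

/-- Hibi's theorem: if `X` is a pure monomial order ideal of socle degree `e`, then
`h_i ≤ h_j` whenever `0 ≤ i ≤ j ≤ e - i`; in particular the `h`-vector is flawless
(`h_i ≤ h_{e-i}` for `i ≤ e/2`) and its first half is nondecreasing. -/
theorem stmt2 {r : ℕ} (X : Finset (Fin r → ℕ)) (e : ℕ)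
    (hX : IsOrderIdeal X) (hpure : IsPure X e) :
    (∀ i j, i ≤ j → i + j ≤ e → hVec X i ≤ hVec X j) ∧
    (∀ i, i ≤ e / 2 → hVec X i ≤ hVec X (e - i)) ∧
    (∀ i, i + 1 ≤ e / 2 → hVec X i ≤ hVec X (i + 1)) := by
  refine ⟨fun i j hij hije => Hibi.hVec_le X e hX hpure i j hij hije, ?_, ?_⟩
  · intro i hi
    exact Hibi.hVec_le X e hX hpure i (e - i) (by omega) (by omega)
  · intro i hi
    exact Hibi.hVec_le X e hX hpure i (i + 1) (by omega) (by omega)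
end

section
/- Every pure O-sequence of socle degree at most 3 is unimodal. -/
open scoped Classical

/-- a sequence is unimodal if it has no strict interior valley -/
def UnimodalFun (h : ℕ → ℕ) : Prop :=
  ∀ i j k, i ≤ j → j ≤ k → min (h i) (h k) ≤ h j

namespace POS

variable {r : ℕ}


lemma mdeg_add (m m' : Fin r → ℕ) : mdeg (m + m') = mdeg m + mdeg m' := by
  simp [mdeg, Finset.sum_add_distrib]

lemma mdeg_single (a : Fin r) (c : ℕ) : mdeg (Pi.single a c) = c := by
  simp [mdeg]

lemma mdeg_mono {m m' : Fin r → ℕ} (h : m ≤ m') : mdeg m ≤ mdeg m' :=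
  Finset.sum_le_sum fun i _ => h i

lemma eq_zero_of_mdeg_eq_zero {m : Fin r → ℕ} (h : mdeg m = 0) : m = 0 := by
  funext i
  have := (Finset.sum_eq_zero_iff.mp h) i (Finset.mem_univ i)
  simpa using this

lemma exists_decomp {m : Fin r → ℕ} {n : ℕ} (h : mdeg m = n + 1) :
    ∃ a m', m = Pi.single a 1 + m' ∧ mdeg m' = n := by
  have hpos : ∃ a, 0 < m a := by
    by_contra hc
    push_neg at hc
    have : mdeg m = 0 := Finset.sum_eq_zero fun i _ => Nat.le_zero.mp (hc i)
    omega
  obtain ⟨a, ha⟩ := hpos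
  refine ⟨a, fun i => m i - (Pi.single a 1 : Fin r → ℕ) i, ?_, ?_⟩
  · funext i
    by_cases hia : i = a
    · subst hia; simp [Pi.single_apply]; omega
    · simp [Pi.single_apply, hia]
  · have heq : m = Pi.single a 1 + fun i => m i - (Pi.single a 1 : Fin r → ℕ) i := by
      funext i
      by_cases hia : i = a
      · subst hia; simp [Pi.single_apply]; omega
      · simp [Pi.single_apply, hia]
    have := mdeg_add (Pi.single a 1) (fun i => m i - (Pi.single a 1 : Fin r → ℕ) i)
    rw [← heq, mdeg_single] at this
    omega

lemma exists_le_of_le_mdeg : ∀ (n : ℕ) (m : Fin r → ℕ), mdeg m = n →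
    ∀ i, i ≤ n → ∃ m', m' ≤ m ∧ mdeg m' = i := by
  intro n
  induction n with
  | zero => intro m hm i hi; exact ⟨m, le_refl m, by omega⟩
  | succ n ih =>
    intro m hm i hi
    rcases Nat.eq_or_lt_of_le hi with heq | hlt
    · exact ⟨m, le_refl m, by omega⟩
    · obtain ⟨a, m', hdec, hd⟩ := exists_decomp hm
      obtain ⟨m'', hle, hd''⟩ := ih m' hd i (by omega)
      refine ⟨m'', le_trans hle ?_, hd''⟩
      rw [hdec]; exact le_add_self

lemma exists_max {X : Finset (Fin r → ℕ)} {m : Fin r → ℕ} (hm : m ∈ X) :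
    ∃ g ∈ maxMons X, m ≤ g := by
  obtain ⟨g, hg, hmax⟩ := (X.filter (m ≤ ·)).exists_maximal ⟨m, by simp [hm]⟩
  rw [Finset.mem_filter] at hg
  refine ⟨g, ?_, hg.2⟩
  rw [maxMons, Finset.mem_filter]
  refine ⟨hg.1, fun m' hm' hle => ?_⟩
  by_contra hne
  exact hne (le_antisymm (hmax (Finset.mem_filter.mpr ⟨hm', le_trans hg.2 hle⟩) hle) hle)


noncomputable def pr (a b : Fin r) : Fin r → ℕ := Pi.single a 1 + Pi.single b 1

lemma pr_apply (a b x : Fin r) :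
    pr a b x = (if x = a then 1 else 0) + (if x = b then 1 else 0) := by
  simp [pr, Pi.single_apply]

lemma pr_comm (a b : Fin r) : pr a b = pr b a := add_comm _ _

lemma mdeg_pr (a b : Fin r) : mdeg (pr a b) = 2 := by
  simp [pr, mdeg_add, mdeg_single]

lemma single_injective' {a b : Fin r} (h : (Pi.single a 1 : Fin r → ℕ) = Pi.single b 1) :
    a = b := by
  have := congrFun h a
  simp [Pi.single_apply] at this
  by_contra hne
  exact hne this

lemma pr_inj {a b c d : Fin r} (h : pr a b = pr c d) :
    (a = c ∧ b = d) ∨ (a = d ∧ b = c) := by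
  by_cases hac : a = c
  · subst hac
    have : (Pi.single b 1 : Fin r → ℕ) = Pi.single d 1 := by
      have := h
      rw [pr, pr] at this
      exact add_left_cancel this
    exact Or.inl ⟨rfl, single_injective' this⟩
  · have h1 := congrFun h a
    rw [pr_apply, pr_apply] at h1
    simp only [if_pos rfl] at h1
    rw [if_neg hac] at h1
    have had : a = d := by
      by_contra hne
      rw [if_neg hne] at h1
      simp at h1
    subst had
    rw [pr_comm c a] at h
    have : (Pi.single b 1 : Fin r → ℕ) = Pi.single c 1 := by
      rw [pr, pr] at h
      exact add_left_cancel h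
    exact Or.inr ⟨rfl, single_injective' this⟩

lemma single_le_pr {a b c : Fin r} : (Pi.single c 1 : Fin r → ℕ) ≤ pr a b ↔ c = a ∨ c = b := by
  constructor
  · intro h
    have := h c
    rw [pr_apply] at this
    simp [Pi.single_apply] at this
    by_contra hne
    push_neg at hne
    rw [if_neg hne.1, if_neg hne.2] at this
    omega
  · rintro (rfl | rfl)
    · exact le_add_self.trans_eq (add_comm _ _)
    · exact le_add_self

lemma shape_two {m : Fin r → ℕ} (h : mdeg m = 2) : ∃ a b, m = pr a b := by
  obtain ⟨a, m', rfl, h1⟩ := exists_decomp h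
  obtain ⟨b, m'', rfl, h0⟩ := exists_decomp h1
  refine ⟨a, b, ?_⟩
  rw [eq_zero_of_mdeg_eq_zero h0, pr, add_zero]

lemma shape_one {m : Fin r → ℕ} (h : mdeg m = 1) : ∃ a, m = Pi.single a 1 := by
  obtain ⟨a, m', rfl, h0⟩ := exists_decomp h
  exact ⟨a, by rw [eq_zero_of_mdeg_eq_zero h0, add_zero]⟩


lemma core (A : Finset (Fin r)) (S : Finset (Fin r → ℕ))
    (H1 : ∀ s ∈ S, ∃ a b, s = pr a b)
    (H2 : ∀ a b, pr a b ∈ S → a ∈ A)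
    (H3 : ∀ a ∈ A, ∃ b c, pr a b ∈ S ∧ pr a c ∈ S ∧ pr b c ∈ S) :
    A.card ≤ S.card := by
  classical
  -- the degree-plus-loop weight
  set w : Fin r → ℕ := fun a =>
    (S.filter (fun s => (Pi.single a 1 : Fin r → ℕ) ≤ s)).card +
      (if pr a a ∈ S then 1 else 0) with hw
  have hdegpos : ∀ a ∈ A, 1 ≤ (S.filter (fun s => (Pi.single a 1 : Fin r → ℕ) ≤ s)).card := by
    intro a ha
    obtain ⟨b, c, hab, -, -⟩ := H3 a ha
    exact Finset.card_pos.mpr ⟨pr a b,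
      Finset.mem_filter.mpr ⟨hab, single_le_pr.mpr (Or.inl rfl)⟩⟩
  -- STEP 1 : upper bound  ∑ w ≤ 2|S|
  have upper : ∑ a ∈ A, w a ≤ 2 * S.card := by
    have swap : ∑ a ∈ A, (S.filter (fun s => (Pi.single a 1 : Fin r → ℕ) ≤ s)).card
        = ∑ s ∈ S, (A.filter (fun a => (Pi.single a 1 : Fin r → ℕ) ≤ s)).card := by
      simp only [Finset.card_filter]
      exact Finset.sum_comm
    have diag : ∑ a ∈ A, (if pr a a ∈ S then 1 else 0)
        = ∑ s ∈ S, (if ∃ a, s = pr a a then 1 else 0) := by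
      rw [← Finset.card_filter, ← Finset.card_filter]
      apply Finset.card_bij (fun a _ => pr a a)
      · intro a ha
        rw [Finset.mem_filter] at ha
        exact Finset.mem_filter.mpr ⟨ha.2, ⟨a, rfl⟩⟩
      · intro a ha b hb heq
        rcases pr_inj heq with ⟨h, -⟩ | ⟨h, -⟩ <;> exact h
      · intro s hs
        rw [Finset.mem_filter] at hs
        obtain ⟨a, rfl⟩ := hs.2
        exact ⟨a, Finset.mem_filter.mpr ⟨H2 a a hs.1, hs.1⟩, rfl⟩
    have persum : ∀ s ∈ S,
        (A.filter (fun a => (Pi.single a 1 : Fin r → ℕ) ≤ s)).card +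
          (if ∃ a, s = pr a a then 1 else 0) ≤ 2 := by
      intro s hs
      obtain ⟨a, b, rfl⟩ := H1 s hs
      by_cases hd : ∃ c, pr a b = pr c c
      · rw [if_pos hd]
        obtain ⟨c, hc⟩ := hd
        have hac : a = c ∧ b = c := by
          rcases pr_inj hc with h | h <;> exact h
        have hsub : A.filter (fun x => (Pi.single x 1 : Fin r → ℕ) ≤ pr a b) ⊆ {c} := by
          intro x hx
          rw [Finset.mem_filter] at hx
          rw [Finset.mem_singleton]
          rcases single_le_pr.mp hx.2 with rfl | rfl
          · exact hac.1
          · exact hac.2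
        have := Finset.card_le_card hsub
        simp only [Finset.card_singleton] at this
        omega
      · rw [if_neg hd]
        have hsub : A.filter (fun x => (Pi.single x 1 : Fin r → ℕ) ≤ pr a b) ⊆ {a, b} := by
          intro x hx
          rw [Finset.mem_filter] at hx
          rcases single_le_pr.mp hx.2 with rfl | rfl
          · exact Finset.mem_insert_self _ _
          · exact Finset.mem_insert_of_mem (Finset.mem_singleton_self _)
        have h1 := Finset.card_le_card hsub
        have h2 : ({a, b} : Finset (Fin r)).card ≤ 2 := Finset.card_insert_le _ _ |>.trans
          (by simp)
        omega
    calc ∑ a ∈ A, w a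
        = ∑ a ∈ A, (S.filter (fun s => (Pi.single a 1 : Fin r → ℕ) ≤ s)).card
          + ∑ a ∈ A, (if pr a a ∈ S then 1 else 0) := by
          rw [hw, ← Finset.sum_add_distrib]
      _ = ∑ s ∈ S, ((A.filter (fun a => (Pi.single a 1 : Fin r → ℕ) ≤ s)).card
          + (if ∃ a, s = pr a a then 1 else 0)) := by
          rw [swap, diag, ← Finset.sum_add_distrib]
      _ ≤ ∑ s ∈ S, 2 := Finset.sum_le_sum persum
      _ = 2 * S.card := by rw [Finset.sum_const, smul_eq_mul, mul_comm]
  -- STEP 2 : structure of deficient vertices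
  have struct : ∀ a ∈ A.filter (fun a => w a ≤ 1),
      ∃ b, b ≠ a ∧ pr a b ∈ S ∧ pr b b ∈ S := by
    intro a ha
    rw [Finset.mem_filter] at ha
    obtain ⟨haA, haw⟩ := ha
    obtain ⟨b, c, hab, hac, hbc⟩ := H3 a haA
    have hnoloop : pr a a ∉ S := by
      intro hl
      have := hdegpos a haA
      rw [hw] at haw
      simp only [if_pos hl] at haw
      omega
    have hdeg1 : (S.filter (fun s => (Pi.single a 1 : Fin r → ℕ) ≤ s)).card = 1 := by
      have := hdegpos a haA
      rw [hw] at haw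
      by_cases hl : pr a a ∈ S
      · exact absurd hl hnoloop
      · simp only [if_neg hl] at haw; omega
    have hba : b ≠ a := by rintro rfl; exact hnoloop hab
    have hca : c ≠ a := by rintro rfl; exact hnoloop hac
    have hbceq : b = c := by
      by_contra hne
      obtain ⟨x, hx⟩ := Finset.card_eq_one.mp hdeg1
      have hb' : pr a b ∈ S.filter (fun s => (Pi.single a 1 : Fin r → ℕ) ≤ s) :=
        Finset.mem_filter.mpr ⟨hab, single_le_pr.mpr (Or.inl rfl)⟩
      have hc' : pr a c ∈ S.filter (fun s => (Pi.single a 1 : Fin r → ℕ) ≤ s) :=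
        Finset.mem_filter.mpr ⟨hac, single_le_pr.mpr (Or.inl rfl)⟩
      rw [hx, Finset.mem_singleton] at hb' hc'
      rcases pr_inj (hb'.trans hc'.symm) with ⟨-, h⟩ | ⟨h1, h2⟩
      · exact hne h
      · exact hca h1.symm
    subst hbceq
    exact ⟨b, hba, hab, hbc⟩
  -- choose the attachment map
  choose f hf using struct
  set g : Fin r → Fin r := fun a =>
    if h : a ∈ A.filter (fun a => w a ≤ 1) then f a h else a with hg
  have hgspec : ∀ a (ha : a ∈ A.filter (fun a => w a ≤ 1)),
      g a ≠ a ∧ pr a (g a) ∈ S ∧ pr (g a) (g a) ∈ S := by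
    intro a ha
    rw [hg]
    simp only [dif_pos ha]
    exact hf a ha
  have hgmem : ∀ a ∈ A.filter (fun a => w a ≤ 1), g a ∈ A.filter (fun a => ¬ w a ≤ 1) := by
    intro a ha
    obtain ⟨hne, hab, hloop⟩ := hgspec a ha
    refine Finset.mem_filter.mpr ⟨H2 (g a) (g a) hloop, ?_⟩
    have hdeg : 1 ≤ (S.filter (fun s => (Pi.single (g a) 1 : Fin r → ℕ) ≤ s)).card :=
      Finset.card_pos.mpr ⟨pr a (g a),
        Finset.mem_filter.mpr ⟨hab, single_le_pr.mpr (Or.inr rfl)⟩⟩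
    rw [hw]
    simp only [if_pos hloop]
    omega
  -- STEP 3 : lower bound 2|A| ≤ ∑ w
  have lower : 2 * A.card ≤ ∑ a ∈ A, w a := by
    have hsplit : ∑ a ∈ A, w a =
        ∑ a ∈ A.filter (fun a => w a ≤ 1), w a +
        ∑ a ∈ A.filter (fun a => ¬ w a ≤ 1), w a :=
      (Finset.sum_filter_add_sum_filter_not A _ w).symm
    have hlow1 : (A.filter (fun a => w a ≤ 1)).card ≤
        ∑ a ∈ A.filter (fun a => w a ≤ 1), w a := by
      rw [Finset.card_eq_sum_ones]
      apply Finset.sum_le_sum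
      intro a ha
      have haA : a ∈ A := (Finset.mem_filter.mp ha).1
      have := hdegpos a haA
      rw [hw]
      exact this.trans (Nat.le_add_right _ _)
    have hfiber : ∑ b ∈ A.filter (fun a => ¬ w a ≤ 1),
        ((A.filter (fun a => w a ≤ 1)).filter (fun a => g a = b)).card =
        (A.filter (fun a => w a ≤ 1)).card :=
      (Finset.card_eq_sum_card_fiberwise hgmem).symm
    have hsurplus : ∀ b ∈ A.filter (fun a => ¬ w a ≤ 1),
        ((A.filter (fun a => w a ≤ 1)).filter (fun a => g a = b)).card + 2 ≤ w b := by
      intro b hb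
      have hb' := Finset.mem_filter.mp hb
      by_cases hF : ((A.filter (fun a => w a ≤ 1)).filter (fun a => g a = b)).Nonempty
      · obtain ⟨a0, ha0⟩ := hF
        have ha0' := Finset.mem_filter.mp ha0
        have hspec := hgspec a0 ha0'.1
        rw [ha0'.2] at hspec
        have hloop : pr b b ∈ S := hspec.2.2
        have hFb : ∀ a ∈ (A.filter (fun a => w a ≤ 1)).filter (fun a => g a = b),
            a ≠ b := by
          intro a haF heq
          subst heq
          exact hb'.2 (Finset.mem_filter.mp (Finset.mem_filter.mp haF).1).2
        have himg : (((A.filter (fun a => w a ≤ 1)).filter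
              (fun a => g a = b)).image (fun a => pr a b)) ∪ {pr b b} ⊆
            S.filter (fun s => (Pi.single b 1 : Fin r → ℕ) ≤ s) := by
          intro s hs
          rcases Finset.mem_union.mp hs with hs | hs
          · obtain ⟨a, haF, rfl⟩ := Finset.mem_image.mp hs
            have haF' := Finset.mem_filter.mp haF
            have hsp := hgspec a haF'.1
            rw [haF'.2] at hsp
            exact Finset.mem_filter.mpr ⟨hsp.2.1, single_le_pr.mpr (Or.inr rfl)⟩
          · rw [Finset.mem_singleton] at hs; subst hs
            exact Finset.mem_filter.mpr ⟨hloop, single_le_pr.mpr (Or.inl rfl)⟩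
        have hinj : Set.InjOn (fun a => pr a b)
            ((A.filter (fun a => w a ≤ 1)).filter (fun a => g a = b)) := by
          intro x hx y hy hxy
          rcases pr_inj hxy with ⟨h, -⟩ | ⟨h1, -⟩
          · exact h
          · exact absurd h1 (hFb x hx)
        have hcardimg := Finset.card_image_of_injOn hinj
        have hdisj : Disjoint (((A.filter (fun a => w a ≤ 1)).filter
            (fun a => g a = b)).image (fun a => pr a b)) ({pr b b} : Finset (Fin r → ℕ)) := by
          rw [Finset.disjoint_singleton_right]
          intro hmem
          obtain ⟨a, haF, heq⟩ := Finset.mem_image.mp hmem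
          rcases pr_inj heq with ⟨h, -⟩ | ⟨h, -⟩ <;> exact hFb a haF h
        have hcard := Finset.card_le_card himg
        rw [Finset.card_union_of_disjoint hdisj, hcardimg, Finset.card_singleton] at hcard
        have hwb : w b = (S.filter (fun s => (Pi.single b 1 : Fin r → ℕ) ≤ s)).card + 1 := by
          rw [hw]
          simp only [if_pos hloop]
        rw [hwb]
        omega
      · rw [Finset.not_nonempty_iff_eq_empty] at hF
        rw [hF, Finset.card_empty]
        have := hb'.2
        omega
    have hlow2 : (A.filter (fun a => w a ≤ 1)).card +
        2 * (A.filter (fun a => ¬ w a ≤ 1)).card ≤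
        ∑ a ∈ A.filter (fun a => ¬ w a ≤ 1), w a := by
      calc (A.filter (fun a => w a ≤ 1)).card +
            2 * (A.filter (fun a => ¬ w a ≤ 1)).card
          = ∑ b ∈ A.filter (fun a => ¬ w a ≤ 1),
            (((A.filter (fun a => w a ≤ 1)).filter (fun a => g a = b)).card + 2) := by
            rw [Finset.sum_add_distrib, hfiber, Finset.sum_const, smul_eq_mul, mul_comm]
        _ ≤ ∑ a ∈ A.filter (fun a => ¬ w a ≤ 1), w a := Finset.sum_le_sum hsurplus
    have hctot : (A.filter (fun a => w a ≤ 1)).card +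
        (A.filter (fun a => ¬ w a ≤ 1)).card = A.card :=
      Finset.card_filter_add_card_filter_not _
    omega
  omega



lemma mdeg_le_of_pure {X : Finset (Fin r → ℕ)} {e : ℕ} (hX : IsOrderIdeal X)
    (hpure : IsPure X e) {m : Fin r → ℕ} (hm : m ∈ X) : mdeg m ≤ e := by
  obtain ⟨g, hg, hle⟩ := exists_max hm
  exact (mdeg_mono hle).trans_eq (hpure g hg)

lemma hVec_eq_zero {X : Finset (Fin r → ℕ)} {e : ℕ} (hX : IsOrderIdeal X)
    (hpure : IsPure X e) {i : ℕ} (hi : e < i) : hVec X i = 0 := by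
  rw [hVec, Finset.card_eq_zero, Finset.filter_eq_empty_iff]
  intro m hm hdeg
  have := mdeg_le_of_pure hX hpure hm
  omega

lemma hVec_pos {X : Finset (Fin r → ℕ)} {e : ℕ} (hX : IsOrderIdeal X)
    (hpure : IsPure X e) {i : ℕ} (hi : i ≤ e) : 1 ≤ hVec X i := by
  obtain ⟨m0, hm0⟩ := hX.1
  obtain ⟨g, hg, -⟩ := exists_max hm0
  have hgX : g ∈ X := Finset.mem_of_mem_filter g hg
  have hge : mdeg g = e := hpure g hg
  obtain ⟨m', hle, hdeg⟩ := exists_le_of_le_mdeg e g hge i hi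
  rw [hVec]
  exact Finset.card_pos.mpr ⟨m', Finset.mem_filter.mpr ⟨hX.2 g hgX m' hle, hdeg⟩⟩

lemma hVec_zero_le_one (X : Finset (Fin r → ℕ)) : hVec X 0 ≤ 1 := by
  rw [hVec]
  have hsub : X.filter (fun m => mdeg m = 0) ⊆ {0} := by
    intro m hm
    rw [Finset.mem_singleton]
    exact eq_zero_of_mdeg_eq_zero (Finset.mem_filter.mp hm).2
  simpa using Finset.card_le_card hsub

lemma h1_le_h2 {X : Finset (Fin r → ℕ)} (hX : IsOrderIdeal X) (hpure : IsPure X 3) :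
    hVec X 1 ≤ hVec X 2 := by
  classical
  have hA : hVec X 1 =
      (Finset.univ.filter (fun a : Fin r => (Pi.single a 1 : Fin r → ℕ) ∈ X)).card := by
    rw [hVec]
    have himg : X.filter (fun m => mdeg m = 1) =
        (Finset.univ.filter (fun a : Fin r => (Pi.single a 1 : Fin r → ℕ) ∈ X)).image
          (fun a => (Pi.single a 1 : Fin r → ℕ)) := by
      ext m
      simp only [Finset.mem_filter, Finset.mem_image, Finset.mem_univ, true_and]
      constructor
      · rintro ⟨hmX, hdeg⟩
        obtain ⟨a, rfl⟩ := shape_one hdeg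
        exact ⟨a, hmX, rfl⟩
      · rintro ⟨a, haX, rfl⟩
        exact ⟨haX, mdeg_single a 1⟩
    rw [himg, Finset.card_image_of_injective _ (fun a b h => single_injective' h)]
  have hS : hVec X 2 = (X.filter (fun m => mdeg m = 2)).card := rfl
  rw [hA, hS]
  apply core
  · intro s hs
    exact shape_two (Finset.mem_filter.mp hs).2
  · intro a b hab
    have habX : pr a b ∈ X := Finset.mem_of_mem_filter _ hab
    have : (Pi.single a 1 : Fin r → ℕ) ∈ X :=
      hX.2 _ habX _ (single_le_pr.mpr (Or.inl rfl))
    simpa using this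
  · intro a ha
    have haX : (Pi.single a 1 : Fin r → ℕ) ∈ X := by simpa using ha
    obtain ⟨g, hg, hle⟩ := exists_max haX
    have hgX : g ∈ X := Finset.mem_of_mem_filter g hg
    have hg3 : mdeg g = 3 := hpure g hg
    have hdec : g = Pi.single a 1 + fun i => g i - (Pi.single a 1 : Fin r → ℕ) i := by
      funext i
      have h1 : (Pi.single a 1 : Fin r → ℕ) i ≤ g i := hle i
      simp only [Pi.add_apply]
      show g i = (Pi.single a 1 : Fin r → ℕ) i + (g i - (Pi.single a 1 : Fin r → ℕ) i)
      omega
    have hm2 : mdeg (fun i => g i - (Pi.single a 1 : Fin r → ℕ) i) = 2 := by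
      have := mdeg_add (Pi.single a 1) (fun i => g i - (Pi.single a 1 : Fin r → ℕ) i)
      rw [← hdec, mdeg_single] at this
      omega
    obtain ⟨b, c, hbc⟩ := shape_two hm2
    rw [hbc] at hdec
    refine ⟨b, c, ?_, ?_, ?_⟩
    · have heq : g = pr a b + Pi.single c 1 := by
        rw [hdec]; simp only [pr]; ring
      have hmem : pr a b ∈ X := hX.2 g hgX _ (heq ▸ self_le_add_right _ _)
      exact Finset.mem_filter.mpr ⟨hmem, mdeg_pr a b⟩
    · have heq : g = pr a c + Pi.single b 1 := by
        rw [hdec]; simp only [pr]; ring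
      have hmem : pr a c ∈ X := hX.2 g hgX _ (heq ▸ self_le_add_right _ _)
      exact Finset.mem_filter.mpr ⟨hmem, mdeg_pr a c⟩
    · have heq : g = pr b c + Pi.single a 1 := by
        rw [hdec]; simp only [pr]; ring
      have hmem : pr b c ∈ X := hX.2 g hgX _ (heq ▸ self_le_add_right _ _)
      exact Finset.mem_filter.mpr ⟨hmem, mdeg_pr b c⟩

end POS

/-- Every pure `O`-sequence of socle degree at most `3` is unimodal. -/
theorem stmt3 {r : ℕ} (X : Finset (Fin r → ℕ)) (e : ℕ)
    (hX : IsOrderIdeal X) (hpure : IsPure X e) (he : e ≤ 3) :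
    UnimodalFun (hVec X) := by
  intro i j k hij hjk
  rcases eq_or_lt_of_le hij with rfl | hij'
  · exact min_le_left _ _
  rcases eq_or_lt_of_le hjk with rfl | hjk'
  · exact min_le_right _ _
  by_cases hk : e < k
  · have h0 : hVec X k = 0 := POS.hVec_eq_zero hX hpure hk
    exact le_trans (by rw [h0]; exact min_le_right _ _) (Nat.zero_le _)
  push_neg at hk
  have hj1 : 1 ≤ hVec X j := POS.hVec_pos hX hpure (by omega)
  by_cases hi0 : i = 0
  · subst hi0
    exact le_trans (min_le_left _ _) (le_trans (POS.hVec_zero_le_one X) hj1)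
  · have hi1 : i = 1 := by omega
    have hj2 : j = 2 := by omega
    have he3 : e = 3 := by omega
    subst hi1; subst hj2; subst he3
    exact le_trans (min_le_left _ _) (POS.h1_le_h2 hX hpure)
end

section
/- The number of pure O-sequences of codimension r, socle degree e, and type 1 equals p_r(e), the number of partitions of e into exactly r parts. -/
open scoped Classical

open Polynomial Finset

noncomputable def fpoly (c : ℕ) : Polynomial ℤ := ∑ k ∈ Finset.range (c+1), X ^ k

noncomputable def Qm (s : Multiset ℕ) : Polynomial ℤ := (s.map fpoly).prod

noncomputable def PR (u : Multiset ℕ) : Polynomial ℤ := (u.map fun d => (X:Polynomial ℤ) ^ d - 1).prod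

lemma fpoly_degreelt (c : ℕ) : (∑ k ∈ Finset.range c, (X:Polynomial ℤ) ^ k).degree < (c : WithBot ℕ) := by
  apply lt_of_le_of_lt (Polynomial.degree_sum_le _ _)
  rw [Finset.sup_lt_iff (by exact_mod_cast WithBot.bot_lt_coe c)]
  intro k hk
  calc (X ^ k : Polynomial ℤ).degree ≤ k := Polynomial.degree_X_pow_le k
    _ < (c : WithBot ℕ) := by exact_mod_cast Finset.mem_range.mp hk

lemma fpoly_monic (c : ℕ) : (fpoly c).Monic := by
  unfold fpoly
  rw [Finset.sum_range_succ]
  rw [add_comm]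
  apply Polynomial.monic_X_pow_add
  apply lt_of_le_of_lt (Polynomial.degree_sum_le _ _)
  rw [Finset.sup_lt_iff (by exact_mod_cast WithBot.bot_lt_coe c)]
  intro k hk
  calc (X ^ k : Polynomial ℤ).degree ≤ k := Polynomial.degree_X_pow_le k
    _ < (c : WithBot ℕ) := by exact_mod_cast Finset.mem_range.mp hk

lemma fpoly_natDegree (c : ℕ) : (fpoly c).natDegree = c := by
  unfold fpoly
  rw [Finset.sum_range_succ]
  apply Polynomial.natDegree_eq_of_degree_eq_some
  rw [Polynomial.degree_add_eq_right_of_degree_lt]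
  · exact Polynomial.degree_X_pow c
  · rw [Polynomial.degree_X_pow]; exact fpoly_degreelt c

lemma fpoly_coeff_zero (c : ℕ) : (fpoly c).coeff 0 = 1 := by
  unfold fpoly
  rw [Polynomial.finset_sum_coeff]
  simp [Polynomial.coeff_X_pow, Finset.sum_ite_eq]

lemma fpoly_coeff_one (c : ℕ) : (fpoly c).coeff 1 = if 0 < c then 1 else 0 := by
  unfold fpoly
  rw [Polynomial.finset_sum_coeff]
  simp [Polynomial.coeff_X_pow, Finset.sum_ite_eq, Nat.lt_succ_iff, Nat.succ_le_iff]

lemma Qm_monic (s : Multiset ℕ) : (Qm s).Monic :=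
  Polynomial.monic_multiset_prod_of_monic _ _ fun c _ => fpoly_monic c

lemma Qm_natDegree (s : Multiset ℕ) : (Qm s).natDegree = s.sum := by
  unfold Qm
  rw [Polynomial.natDegree_multiset_prod_of_monic]
  · rw [Multiset.map_map]
    simp [Function.comp, fpoly_natDegree]
  · intro f hf
    obtain ⟨c, _, rfl⟩ := Multiset.mem_map.mp hf
    exact fpoly_monic c

lemma Qm_coeff_zero (s : Multiset ℕ) : (Qm s).coeff 0 = 1 := by
  induction s using Multiset.induction with
  | empty => simp [Qm]
  | cons c s ih =>
    rw [Qm, Multiset.map_cons, Multiset.prod_cons, Polynomial.mul_coeff_zero, ← Qm, ih,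
      fpoly_coeff_zero, one_mul]

lemma Qm_coeff_one (s : Multiset ℕ) : (Qm s).coeff 1 = ((s.filter (0 < ·)).card : ℤ) := by
  induction s using Multiset.induction with
  | empty => simp [Qm, Polynomial.coeff_one]
  | cons c s ih =>
    rw [Qm, Multiset.map_cons, Multiset.prod_cons, ← Qm]
    rw [Polynomial.coeff_mul, Finset.Nat.sum_antidiagonal_eq_sum_range_succ_mk]
    simp only [Finset.sum_range_succ, Finset.sum_range_one]
    rw [fpoly_coeff_zero, fpoly_coeff_one, Qm_coeff_zero, ih]
    rw [Multiset.filter_cons]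
    by_cases hc : 0 < c <;> simp [hc, add_comm]


lemma xd_monic {d : ℕ} (hd : 1 ≤ d) : ((X:Polynomial ℤ) ^ d - 1).Monic := by
  have := Polynomial.monic_X_pow_sub_C (1:ℤ) (Nat.one_le_iff_ne_zero.mp hd)
  simpa using this

lemma PR_monic (u : Multiset ℕ) (hu : ∀ d ∈ u, 1 ≤ d) : (PR u).Monic :=
  Polynomial.monic_multiset_prod_of_monic u _ fun d hd => xd_monic (hu d hd)

lemma PR_natDegree (u : Multiset ℕ) (hu : ∀ d ∈ u, 1 ≤ d) : (PR u).natDegree = u.sum := by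
  unfold PR
  rw [Polynomial.natDegree_multiset_prod_of_monic]
  · rw [Multiset.map_map]
    nth_rewrite 2 [← Multiset.map_id u]
    congr 1
    apply Multiset.map_congr rfl
    intro d hd
    simp only [Function.comp_apply, id_eq]
    have h1 : ((X:Polynomial ℤ) ^ d - 1) = X ^ d - C 1 := by simp
    rw [h1, Polynomial.natDegree_X_pow_sub_C]
  · intro f hf
    obtain ⟨d, hd, rfl⟩ := Multiset.mem_map.mp hf
    exact xd_monic (hu d hd)

lemma PR_coeff_zero (u : Multiset ℕ) (hu : ∀ d ∈ u, 1 ≤ d) :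
    (PR u).coeff 0 = (-1)^u.card := by
  induction u using Multiset.induction with
  | empty => simp [PR, Polynomial.coeff_one]
  | cons d u ih =>
    have hd : 1 ≤ d := hu d (Multiset.mem_cons_self d u)
    rw [PR, Multiset.map_cons, Multiset.prod_cons, ← PR, Polynomial.mul_coeff_zero,
      ih fun d' hd' => hu d' (Multiset.mem_cons_of_mem hd')]
    rw [Polynomial.coeff_sub, Polynomial.coeff_X_pow, if_neg (by omega), Polynomial.coeff_one]
    simp [pow_succ]

lemma PR_coeff_min (u : Multiset ℕ) (m : ℕ) (hm : 1 ≤ m) (hu : ∀ d ∈ u, m ≤ d) :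
    (PR u).coeff m = (-1)^(u.card+1) * u.count m := by
  induction u using Multiset.induction with
  | empty =>
    simp only [PR, Multiset.map_zero, Multiset.prod_zero, Polynomial.coeff_one]
    rw [if_neg (by omega)]
    simp
  | cons d u ih =>
    have hd : m ≤ d := hu d (Multiset.mem_cons_self d u)
    have hu' : ∀ d ∈ u, m ≤ d := fun d' hd' => hu d' (Multiset.mem_cons_of_mem hd')
    rw [PR, Multiset.map_cons, Multiset.prod_cons, ← PR, sub_mul, one_mul,
      Polynomial.coeff_sub, mul_comm, Polynomial.coeff_mul_X_pow', ih hu']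
    rw [Multiset.card_cons, Multiset.count_cons]
    have hu1 : ∀ d ∈ u, 1 ≤ d := fun d' hd' => le_trans hm (hu' d' hd')
    rcases eq_or_lt_of_le hd with h | h
    · subst h
      rw [if_pos le_rfl, if_pos rfl, Nat.sub_self, PR_coeff_zero u hu1]
      push_cast
      ring
    · rw [if_neg (by omega), if_neg (by omega)]
      push_cast
      ring

lemma PR_eq_one (u : Multiset ℕ) (hu : ∀ d ∈ u, 1 ≤ d) (h : PR u = 1) : u = 0 := by
  have hs : u.sum = 0 := by
    rw [← PR_natDegree u hu, h, Polynomial.natDegree_one]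
  apply Multiset.eq_zero_of_forall_notMem
  intro d hd
  have := hu d hd
  have := Multiset.single_le_sum (fun x _ => Nat.zero_le x) d hd
  omega

lemma PR_inj : ∀ n (u v : Multiset ℕ), u.card ≤ n → (∀ d ∈ u, 1 ≤ d) → (∀ d ∈ v, 1 ≤ d) →
    PR u = PR v → u = v := by
  intro n
  induction n with
  | zero =>
    intro u v hc hu hv h
    have hu0 : u = 0 := Multiset.card_eq_zero.mp (Nat.le_zero.mp hc)
    subst hu0
    have : PR v = 1 := by rw [← h]; simp [PR]
    exact (PR_eq_one v hv this).symm
  | succ n ih =>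
    intro u v hc hu hv h
    rcases Multiset.empty_or_exists_mem u with hu0 | ⟨x, hx⟩
    · subst hu0
      have : PR v = 1 := by rw [← h]; simp [PR]
      exact (PR_eq_one v hv this).symm
    rcases Multiset.empty_or_exists_mem v with hv0 | ⟨y, hy⟩
    · subst hv0
      have : PR u = 1 := by rw [h]; simp [PR]
      exact PR_eq_one u hu this
    -- both nonempty; take the minimum of u + v
    have hne : (u + v).toFinset.Nonempty := ⟨x, by simp [Multiset.mem_toFinset]; left; exact hx⟩
    set m := (u + v).toFinset.min' hne with hm
    have hmmem : m ∈ u + v := Multiset.mem_toFinset.mp ((u + v).toFinset.min'_mem hne)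
    have hmLB : ∀ d ∈ u + v, m ≤ d := fun d hd =>
      (u + v).toFinset.min'_le d (Multiset.mem_toFinset.mpr hd)
    have hmu : ∀ d ∈ u, m ≤ d := fun d hd => hmLB d (Multiset.mem_add.mpr (Or.inl hd))
    have hmv : ∀ d ∈ v, m ≤ d := fun d hd => hmLB d (Multiset.mem_add.mpr (Or.inr hd))
    have hm1 : 1 ≤ m := by
      rcases Multiset.mem_add.mp hmmem with h' | h'
      exacts [hu m h', hv m h']
    -- parity of cards
    have hpar : ((-1:ℤ))^u.card = (-1)^v.card := by
      rw [← PR_coeff_zero u hu, ← PR_coeff_zero v hv, h]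
    -- equal counts at m
    have hcnt : u.count m = v.count m := by
      have h1 := PR_coeff_min u m hm1 hmu
      have h2 := PR_coeff_min v m hm1 hmv
      rw [h] at h1
      rw [h1] at h2
      have hp : ((-1:ℤ))^(v.card+1) ≠ 0 := by positivity
      have hsgn : ((-1:ℤ))^(u.card+1) = (-1)^(v.card+1) := by
        rw [pow_succ, pow_succ, hpar]
      rw [hsgn] at h2
      have := mul_left_cancel₀ hp h2
      exact_mod_cast this
    have hmuv : m ∈ u ∧ m ∈ v := by
      rcases Multiset.mem_add.mp hmmem with h' | h'
      · exact ⟨h', by rw [← Multiset.count_pos, ← hcnt, Multiset.count_pos]; exact h'⟩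
      · exact ⟨by rw [← Multiset.count_pos, hcnt, Multiset.count_pos]; exact h', h'⟩
    -- cancel the factor X^m - 1
    have hPRu : PR u = ((X:Polynomial ℤ)^m - 1) * PR (u.erase m) := by
      conv_lhs => rw [← Multiset.cons_erase hmuv.1]
      rw [PR, Multiset.map_cons, Multiset.prod_cons, ← PR]
    have hPRv : PR v = ((X:Polynomial ℤ)^m - 1) * PR (v.erase m) := by
      conv_lhs => rw [← Multiset.cons_erase hmuv.2]
      rw [PR, Multiset.map_cons, Multiset.prod_cons, ← PR]
    have hxne : ((X:Polynomial ℤ)^m - 1) ≠ 0 := (xd_monic hm1).ne_zero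
    have herase : u.erase m = v.erase m := by
      apply ih
      · have h1c : 1 ≤ u.card := Multiset.card_pos.mpr
          (by rintro rfl; exact absurd hx (Multiset.notMem_zero x))
        rw [Multiset.card_erase_of_mem hmuv.1, Nat.pred_eq_sub_one]
        omega
      · exact fun d hd => hu d (Multiset.mem_of_mem_erase hd)
      · exact fun d hd => hv d (Multiset.mem_of_mem_erase hd)
      · apply mul_left_cancel₀ hxne
        rw [← hPRu, ← hPRv, h]
    rw [← Multiset.cons_erase hmuv.1, ← Multiset.cons_erase hmuv.2, herase]
def mbox {r : ℕ} (a : Fin r → ℕ) : Finset (Fin r → ℕ) :=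
  Fintype.piFinset fun i => Finset.range (a i + 1)

lemma mem_mbox {r : ℕ} {a m : Fin r → ℕ} : m ∈ mbox a ↔ m ≤ a := by
  unfold mbox
  simp [Fintype.mem_piFinset, Nat.lt_succ_iff, Pi.le_def]

lemma orderIdeal_mbox {r : ℕ} (a : Fin r → ℕ) : IsOrderIdeal (mbox a) := by
  constructor
  · exact ⟨a, mem_mbox.mpr le_rfl⟩
  · intro m hm m' hm'
    exact mem_mbox.mpr (le_trans hm' (mem_mbox.mp hm))

lemma maxMons_mbox {r : ℕ} (a : Fin r → ℕ) : maxMons (mbox a) = {a} := by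
  ext m
  simp only [maxMons, Finset.mem_filter, Finset.mem_singleton]
  constructor
  · rintro ⟨hm, hmax⟩
    exact (hmax a (mem_mbox.mpr le_rfl) (mem_mbox.mp hm)).symm
  · rintro rfl
    exact ⟨mem_mbox.mpr le_rfl, fun m' hm' h => le_antisymm (mem_mbox.mp hm') h⟩

lemma eq_mbox {r : ℕ} {X : Finset (Fin r → ℕ)} {a : Fin r → ℕ} (hX : IsOrderIdeal X)
    (h : maxMons X = {a}) : X = mbox a := by
  have ha : a ∈ X := by
    have : a ∈ maxMons X := by rw [h]; exact Finset.mem_singleton_self a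
    exact (Finset.mem_filter.mp this).1
  ext m
  rw [mem_mbox]
  constructor
  · intro hm
    obtain ⟨b, hmb, hb⟩ := X.exists_le_maximal hm
    have hbM : b ∈ maxMons X := by
      rw [maxMons, Finset.mem_filter]
      exact ⟨hb.1, fun m' hm' h' => le_antisymm (hb.2 hm' h') h'⟩
    rw [h, Finset.mem_singleton] at hbM
    exact hbM ▸ hmb
  · intro hm
    exact hX.2 a ha m hm

lemma hVec_mbox {r : ℕ} (a : Fin r → ℕ) (i : ℕ) :
    ((hVec (mbox a) i : ℤ)) = (Qm (Multiset.map a Finset.univ.val)).coeff i := by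
  have h1 : Qm (Multiset.map a Finset.univ.val) = ∏ j, fpoly (a j) := by
    simp [Qm, Finset.prod, Multiset.map_map]
    rfl
  have h2 : (∏ j, fpoly (a j)) = ∑ m ∈ mbox a, (X : Polynomial ℤ) ^ (mdeg m) := by
    unfold fpoly mbox mdeg
    rw [Finset.prod_univ_sum]
    exact Finset.sum_congr rfl fun m _ => Finset.prod_pow_eq_pow_sum _ _ _
  rw [h1, h2, Polynomial.finset_sum_coeff]
  unfold hVec
  rw [Finset.card_filter]
  push_cast
  apply Finset.sum_congr rfl
  intro m _
  rw [Polynomial.coeff_X_pow]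
  by_cases h : mdeg m = i
  · simp [h]
  · simp [h, Ne.symm h]



lemma tuple_list {α : Type*} (l : List α) :
    Multiset.map l.get Finset.univ.val = (l : Multiset α) := by
  have h1 : (Finset.univ.val : Multiset (Fin l.length)) = ↑(List.finRange l.length) := rfl
  rw [h1, Multiset.map_coe, ← List.ofFn_eq_map]
  exact congrArg _ (List.ofFn_get l)

lemma exists_tuple {α : Type*} {r : ℕ} (s : Multiset α) (h : Multiset.card s = r) :
    ∃ a : Fin r → α, Multiset.map a Finset.univ.val = s := by
  obtain ⟨l, rfl⟩ := Quot.exists_rep s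
  subst h
  exact ⟨l.get, tuple_list l⟩
lemma Qm_mul (s : Multiset ℕ) :
    Qm s * ((X:Polynomial ℤ) - 1) ^ s.card = PR (s.map (· + 1)) := by
  unfold Qm PR
  rw [Multiset.map_map]
  have h1 : ((X:Polynomial ℤ) - 1) ^ s.card = (s.map fun _ => (X:Polynomial ℤ) - 1).prod := by
    rw [Multiset.map_const', Multiset.prod_replicate]
  rw [h1, ← Multiset.prod_map_mul]
  congr 1
  apply Multiset.map_congr rfl
  intro c _
  simp only [Function.comp_apply]
  exact geom_sum_mul (X : Polynomial ℤ) (c + 1)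

lemma Qm_inj (e : ℕ) (s t : Multiset ℕ) (hse : s.sum = e) (hte : t.sum = e)
    (hcard : s.card = t.card)
    (h : ∀ i, i ≤ e → (Qm s).coeff i = (Qm t).coeff i) : s = t := by
  have hQ : Qm s = Qm t := by
    ext n
    by_cases hn : n ≤ e
    · exact h n hn
    · rw [Polynomial.coeff_eq_zero_of_natDegree_lt, Polynomial.coeff_eq_zero_of_natDegree_lt] <;>
        rw [Qm_natDegree] <;> omega
  have h2 : PR (s.map (· + 1)) = PR (t.map (· + 1)) := by
    rw [← Qm_mul, ← Qm_mul, hQ, hcard]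
  have h3 := PR_inj (Multiset.card (s.map (· + 1))) _ _ le_rfl
    (fun d hd => by obtain ⟨c, _, rfl⟩ := Multiset.mem_map.mp hd; omega)
    (fun d hd => by obtain ⟨c, _, rfl⟩ := Multiset.mem_map.mp hd; omega) h2
  exact Multiset.map_injective (fun a b hab => by omega) h3

/-- The number of pure `O`-sequences of codimension `r`, socle degree `e`, and type `1`
equals `p_r(e)`, the number of partitions of `e` into exactly `r` parts. -/

theorem stmt4 (r e : ℕ) :
    Nat.card {h : Fin (e + 1) → ℕ //
      ∃ X : Finset (Fin r → ℕ), IsOrderIdeal X ∧ IsPure X e ∧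
        (maxMons X).card = 1 ∧ hVec X 1 = r ∧ ∀ i : Fin (e + 1), h i = hVec X i} =
    Fintype.card {p : Nat.Partition e // p.parts.card = r} := by
  rw [← Nat.card_eq_fintype_card]
  symm
  have key : ∀ p : {p : Nat.Partition e // Multiset.card p.parts = r},
      ∃ a : Fin r → ℕ, Multiset.map a Finset.univ.val = p.1.parts :=
    fun p => exists_tuple _ p.2
  choose aOf haOf using key
  have hsum : ∀ p, mdeg (aOf p) = e := by
    intro p
    have h1 : mdeg (aOf p) = (Multiset.map (aOf p) Finset.univ.val).sum := rfl
    rw [h1, haOf p, p.1.parts_sum]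
  have hcards : ∀ p, Multiset.card (Multiset.map (aOf p) Finset.univ.val) = r := by
    intro p
    rw [haOf p]; exact p.2
  have hone : ∀ p, hVec (mbox (aOf p)) 1 = r := by
    intro p
    have h1 := hVec_mbox (aOf p) 1
    rw [Qm_coeff_one, haOf p] at h1
    have h2 : Multiset.filter (0 < ·) p.1.parts = p.1.parts :=
      Multiset.filter_eq_self.mpr fun c hc => p.1.parts_pos hc
    rw [h2, p.2] at h1
    exact_mod_cast h1
  apply Nat.card_eq_of_bijective
    (fun p => ⟨fun i => hVec (mbox (aOf p)) i,
      mbox (aOf p), orderIdeal_mbox _,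
      (by intro m hm
          rw [maxMons_mbox, Finset.mem_singleton] at hm
          rw [hm, hsum p]),
      (by rw [maxMons_mbox]; exact Finset.card_singleton _),
      hone p,
      fun i => rfl⟩)
  constructor
  · -- injective
    intro p q hpq
    have hfun := congrArg Subtype.val hpq
    simp only at hfun
    have hco : ∀ i, i ≤ e →
        (Qm p.1.parts).coeff i = (Qm q.1.parts).coeff i := by
      intro i hi
      have h1 := hVec_mbox (aOf p) i
      have h2 := hVec_mbox (aOf q) i
      rw [haOf p] at h1
      rw [haOf q] at h2
      rw [← h1, ← h2]
      have := congrFun hfun ⟨i, by omega⟩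
      exact_mod_cast this
    have := Qm_inj e p.1.parts q.1.parts p.1.parts_sum q.1.parts_sum
      (by rw [p.2, q.2]) hco
    exact Subtype.ext (Nat.Partition.ext this)
  · -- surjective
    rintro ⟨h, X, hOI, hPure, hcard1, hh1, hhv⟩
    obtain ⟨a, ha⟩ := Finset.card_eq_one.mp hcard1
    have hXbox : X = mbox a := eq_mbox hOI ha
    have haMax : a ∈ maxMons X := by rw [ha]; exact Finset.mem_singleton_self a
    set s : Multiset ℕ := Multiset.map a Finset.univ.val with hs
    have hssum : s.sum = e := hPure a haMax
    have hscard : Multiset.card s = r := by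
      rw [hs, Multiset.card_map]
      simp
    have hspos : ∀ c ∈ s, 0 < c := by
      have h1 := hVec_mbox a 1
      rw [← hXbox, hh1, Qm_coeff_one] at h1
      have h2 : Multiset.card (Multiset.filter (0 < ·) s) = Multiset.card s := by
        rw [hscard]; exact_mod_cast h1.symm
      have h3 := Multiset.eq_of_le_of_card_le (Multiset.filter_le (0 < ·) s)
        (le_of_eq h2.symm)
      exact fun c hc => Multiset.of_mem_filter (h3 ▸ hc)
    refine ⟨⟨⟨s, fun {c} hc => hspos c hc, hssum⟩, hscard⟩, ?_⟩
    apply Subtype.ext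
    funext i
    show hVec (mbox (aOf _)) i = h i
    rw [hhv i, hXbox]
    have h1 := hVec_mbox (aOf ⟨⟨s, fun {c} hc => hspos c hc, hssum⟩, hscard⟩) (i : ℕ)
    have h2 := hVec_mbox a (i : ℕ)
    rw [haOf] at h1
    simp only at h1
    rw [← hs] at h2
    rw [← h1] at h2
    exact_mod_cast h2.symm
end

section
/- Distinct partitions of e into exactly r positive parts yield distinct h-vectors: if (a_1,...,a_r) and (b_1,...,b_r) are weakly decreasing r-tuples of positive integers summing to e, and for every i the number of r-tuples (c_1,...,c_r) with 0 ≤ c_j ≤ a_j and c_1+...+c_r = i equals the number with 0 ≤ c_j ≤ b_j and c_1+...+c_r = i, then (a_1,...,a_r) = (b_1,...,b_r). -/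
open Finset

private def cnt {r : ℕ} (a : Fin r → ℕ) (i : ℕ) : ℕ :=
  ((Fintype.piFinset fun j => Finset.range (a j + 1)).filter
      (fun c => ∑ j, c j = i)).card

private lemma mem_cntSet {r : ℕ} (a : Fin r → ℕ) (i : ℕ) (c : Fin r → ℕ) :
    c ∈ (Fintype.piFinset fun j => Finset.range (a j + 1)).filter
      (fun c => ∑ j, c j = i) ↔ (∀ j, c j ≤ a j) ∧ ∑ j, c j = i := by
  simp [Fintype.mem_piFinset, Nat.lt_succ_iff]

private lemma cnt_lt {r : ℕ} (a b : Fin r → ℕ) (i : ℕ) (j0 : Fin r)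
    (hja : a j0 < i) (hhb : ∀ j, i ≤ b j) : cnt a i < cnt b i := by
  apply Finset.card_lt_card
  constructor
  · intro c hc
    rw [mem_cntSet] at hc ⊢
    refine ⟨fun j => ?_, hc.2⟩
    calc c j ≤ ∑ j', c j' := Finset.single_le_sum (fun _ _ => Nat.zero_le _) (mem_univ j)
    _ = i := hc.2
    _ ≤ b j := hhb j
  · intro hsub
    have hmem : Pi.single j0 i ∈ (Fintype.piFinset fun j => Finset.range (b j + 1)).filter
        (fun c => ∑ j, c j = i) := by
      rw [mem_cntSet]
      constructor
      · intro j
        by_cases hj : j = j0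
        · subst hj; simp [Pi.single_eq_same]; exact hhb j
        · simp [Pi.single_eq_of_ne hj]
      · simp
    have := hsub hmem
    rw [mem_cntSet] at this
    have h2 := this.1 j0
    simp [Pi.single_eq_same] at h2
    omega

private lemma last_eq {r : ℕ} (a b : Fin (r + 1) → ℕ) (ha : Antitone a) (hb : Antitone b)
    (h : ∀ i, cnt a i = cnt b i) : a (Fin.last r) = b (Fin.last r) := by
  by_contra hne
  rcases Nat.lt_or_ge (a (Fin.last r)) (b (Fin.last r)) with hlt | hge
  · have := cnt_lt a b (a (Fin.last r) + 1) (Fin.last r) (Nat.lt_succ_self _)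
      (fun j => le_trans hlt (hb (Fin.le_last j)))
    have h2 := h (a (Fin.last r) + 1)
    omega
  · have hlt : b (Fin.last r) < a (Fin.last r) := lt_of_le_of_ne hge (Ne.symm hne)
    have := cnt_lt b a (b (Fin.last r) + 1) (Fin.last r) (Nat.lt_succ_self _)
      (fun j => le_trans hlt (ha (Fin.le_last j)))
    have h2 := h (b (Fin.last r) + 1)
    omega

/-- convolution decomposition over the last coordinate -/
private lemma cnt_succ {r : ℕ} (a : Fin (r + 1) → ℕ) (i : ℕ) :
    cnt a i = ∑ t ∈ Finset.range (a (Fin.last r) + 1),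
      (if t ≤ i then cnt (fun j : Fin r => a j.castSucc) (i - t) else 0) := by
  unfold cnt
  rw [Finset.card_eq_sum_card_fiberwise (f := fun c => c (Fin.last r))
      (t := Finset.range (a (Fin.last r) + 1))
      (fun c hc => by rw [Finset.mem_coe, mem_cntSet] at hc; simp [Nat.lt_succ_iff]; exact hc.1 _)]
  refine Finset.sum_congr rfl fun t ht => ?_
  by_cases hti : t ≤ i
  · rw [if_pos hti]
    apply Finset.card_bij (fun c _ => fun j : Fin r => c j.castSucc)
    · intro c hc
      rw [Finset.mem_filter, mem_cntSet] at hc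
      obtain ⟨⟨hc1, hc2⟩, hc3⟩ := hc
      rw [mem_cntSet]
      refine ⟨fun j => hc1 _, ?_⟩
      rw [Fin.sum_univ_castSucc] at hc2
      omega
    · intro c1 hc1 c2 hc2 heq
      rw [Finset.mem_filter] at hc1 hc2
      funext j
      refine Fin.lastCases ?_ (fun k => ?_) j
      · rw [hc1.2, hc2.2]
      · exact congrFun heq k
    · intro c' hc'
      rw [mem_cntSet] at hc'
      refine ⟨Fin.snoc c' t, ?_, ?_⟩
      · rw [Finset.mem_filter, mem_cntSet]
        refine ⟨⟨fun j => ?_, ?_⟩, by simp⟩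
        · refine Fin.lastCases ?_ (fun k => ?_) j
          · simp; exact Nat.lt_succ_iff.mp (Finset.mem_range.mp ht)
          · simp; exact hc'.1 k
        · rw [Fin.sum_univ_castSucc]
          simp
          omega
      · funext j; simp
  · rw [if_neg hti]
    rw [Finset.card_eq_zero, Finset.filter_eq_empty_iff]
    intro c hc
    rw [mem_cntSet] at hc
    intro hlast
    have : c (Fin.last r) ≤ ∑ j, c j :=
      Finset.single_le_sum (fun _ _ => Nat.zero_le _) (mem_univ _)
    omega

private lemma cnt_peel {r : ℕ} (a b : Fin (r + 1) → ℕ)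
    (hlast : a (Fin.last r) = b (Fin.last r))
    (h : ∀ i, cnt a i = cnt b i) :
    ∀ i, cnt (fun j : Fin r => a j.castSucc) i = cnt (fun j => b j.castSucc) i := by
  intro i
  induction i using Nat.strong_induction_on with
  | _ i IH =>
    have ha := cnt_succ a i
    have hb := cnt_succ b i
    rw [hlast] at ha
    set m := b (Fin.last r) with hm
    rw [Finset.sum_range_succ'] at ha hb
    simp only [Nat.zero_le, if_true, Nat.sub_zero] at ha hb
    have hsum : (∑ t ∈ Finset.range m,
        (if t + 1 ≤ i then cnt (fun j : Fin r => a j.castSucc) (i - (t + 1)) else 0)) =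
        (∑ t ∈ Finset.range m,
        (if t + 1 ≤ i then cnt (fun j : Fin r => b j.castSucc) (i - (t + 1)) else 0)) := by
      refine Finset.sum_congr rfl fun t _ => ?_
      by_cases hti : t + 1 ≤ i
      · rw [if_pos hti, if_pos hti, IH _ (by omega)]
      · rw [if_neg hti, if_neg hti]
    have := h i
    omega

private lemma main_ind : ∀ (r : ℕ) (a b : Fin r → ℕ), Antitone a → Antitone b →
    (∀ i, cnt a i = cnt b i) → a = b := by
  intro r
  induction r with
  | zero => intro a b _ _ _; funext j; exact j.elim0
  | succ n IH =>
    intro a b ha hb h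
    have hlast := last_eq a b ha hb h
    have hpeel := cnt_peel a b hlast h
    have ha' : Antitone (fun j : Fin n => a j.castSucc) :=
      ha.comp_monotone (fun _ _ hle => Fin.castSucc_le_castSucc_iff.mpr hle)
    have hb' : Antitone (fun j : Fin n => b j.castSucc) :=
      hb.comp_monotone (fun _ _ hle => Fin.castSucc_le_castSucc_iff.mpr hle)
    have heq := IH _ _ ha' hb' hpeel
    funext j
    refine Fin.lastCases hlast (fun k => ?_) j
    exact congrFun heq k

/-- Distinct partitions of `e` into exactly `r` positive parts yield distinct `h`-vectors:
if the divisor order ideals of `y_1^{a_1}···y_r^{a_r}` and `y_1^{b_1}···y_r^{b_r}` have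
the same number of monomials in every degree, then `(a_1,...,a_r) = (b_1,...,b_r)`. -/
theorem stmt5 (r e : ℕ) (a b : Fin r → ℕ)
    (ha_dec : Antitone a) (hb_dec : Antitone b)
    (ha_pos : ∀ j, 1 ≤ a j) (hb_pos : ∀ j, 1 ≤ b j)
    (ha_sum : ∑ j, a j = e) (hb_sum : ∑ j, b j = e)
    (h : ∀ i, ((Fintype.piFinset fun j => Finset.range (a j + 1)).filter
          (fun c => ∑ j, c j = i)).card =
        ((Fintype.piFinset fun j => Finset.range (b j + 1)).filter
          (fun c => ∑ j, c j = i)).card) :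
    a = b := by
  exact main_ind r a b ha_dec hb_dec h
end

section
/- The sequence (1,8,16,24,36) is a pure O-sequence (being the entrywise sum of the pure O-sequences (1,4,10,20,35) and (0,4,6,4,1) realized in disjoint sets of variables), but its first difference (1,7,8,8,12) is not an O-sequence since 12 > (8_{(3)})^1_1 = 10; hence (1,8,16,24,36) is a nondecreasing pure O-sequence that is not differentiable. -/
open scoped Classical

/-- a finite list `(h_0, h_1, ...)` is an `O`-sequence if `h_0 = 1` and Macaulay's
growth bound `h_{t+1} ≤ ((h_t)_(t))^1_1` holds for all `t ≥ 1` -/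
def IsOSeqList (h : List ℕ) : Prop :=
  h.getD 0 0 = 1 ∧ ∀ t, 1 ≤ t → t + 1 < h.length → h.getD (t + 1) 0 ≤ mb (h.getD t 0) t

/-- first difference of a finite sequence -/
def diffList (l : List ℕ) : List ℕ := l.zipWith (fun x y => x - y) (0 :: l)

-- auxiliary material ------------------------------------------------------

instance piLEdec {r : ℕ} (a b : Fin r → ℕ) : Decidable (a ≤ b) :=
  decidable_of_iff (∀ i, a i ≤ b i) Iff.rfl

lemma mdeg_update {r : ℕ} (m : Fin r → ℕ) (i : Fin r) (h : 0 < m i) :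
    mdeg (Function.update m i (m i - 1)) + 1 = mdeg m := by
  unfold mdeg
  rw [Finset.sum_update_of_mem (Finset.mem_univ i),
    ← Finset.add_sum_erase _ m (Finset.mem_univ i), Finset.erase_eq]
  omega

lemma down_closed {r : ℕ} (X : Finset (Fin r → ℕ))
    (H : ∀ m ∈ X, ∀ i, 0 < m i → Function.update m i (m i - 1) ∈ X) :
    ∀ n (m : Fin r → ℕ), mdeg m ≤ n → m ∈ X → ∀ m', m' ≤ m → m' ∈ X := by
  intro n
  induction n with
  | zero =>
    intro m hd hm m' hle
    have : m' = m := by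
      funext i
      have h1 : m' i ≤ m i := hle i
      have h2 : m i ≤ mdeg m :=
        Finset.single_le_sum (fun j _ => Nat.zero_le _) (Finset.mem_univ i)
      omega
    rwa [this]
  | succ n ih =>
    intro m hd hm m' hle
    by_cases he : m' = m
    · rwa [he]
    · have : ∃ i, m' i < m i := by
        by_contra hc
        push_neg at hc
        exact he (funext fun i => le_antisymm (hle i) (hc i))
      obtain ⟨i, hi⟩ := this
      have hpos : 0 < m i := Nat.lt_of_le_of_lt (Nat.zero_le _) hi
      have hX := H m hm i hpos
      have hdeg := mdeg_update m i hpos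
      refine ih _ (by omega) hX m' fun j => ?_
      rcases eq_or_ne j i with rfl | hj
      · have : Function.update m j (m j - 1) j = m j - 1 := Function.update_self _ _ _
        rw [this]; exact Nat.le_sub_one_of_lt hi
      · have : Function.update m i (m i - 1) j = m j := Function.update_of_ne hj _ _
        rw [this]; exact hle j

/-- the 85 monomials: all monomials of degree ≤ 4 in the first four variables,
together with the squarefree monomials in the last four variables -/
def Lmons : List (Fin 8 → ℕ) := [
  ![0,0,0,0,0,0,0,0],
  ![0,0,0,1,0,0,0,0],
  ![0,0,0,2,0,0,0,0],
  ![0,0,0,3,0,0,0,0],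
  ![0,0,0,4,0,0,0,0],
  ![0,0,1,0,0,0,0,0],
  ![0,0,1,1,0,0,0,0],
  ![0,0,1,2,0,0,0,0],
  ![0,0,1,3,0,0,0,0],
  ![0,0,2,0,0,0,0,0],
  ![0,0,2,1,0,0,0,0],
  ![0,0,2,2,0,0,0,0],
  ![0,0,3,0,0,0,0,0],
  ![0,0,3,1,0,0,0,0],
  ![0,0,4,0,0,0,0,0],
  ![0,1,0,0,0,0,0,0],
  ![0,1,0,1,0,0,0,0],
  ![0,1,0,2,0,0,0,0],
  ![0,1,0,3,0,0,0,0],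
  ![0,1,1,0,0,0,0,0],
  ![0,1,1,1,0,0,0,0],
  ![0,1,1,2,0,0,0,0],
  ![0,1,2,0,0,0,0,0],
  ![0,1,2,1,0,0,0,0],
  ![0,1,3,0,0,0,0,0],
  ![0,2,0,0,0,0,0,0],
  ![0,2,0,1,0,0,0,0],
  ![0,2,0,2,0,0,0,0],
  ![0,2,1,0,0,0,0,0],
  ![0,2,1,1,0,0,0,0],
  ![0,2,2,0,0,0,0,0],
  ![0,3,0,0,0,0,0,0],
  ![0,3,0,1,0,0,0,0],
  ![0,3,1,0,0,0,0,0],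
  ![0,4,0,0,0,0,0,0],
  ![1,0,0,0,0,0,0,0],
  ![1,0,0,1,0,0,0,0],
  ![1,0,0,2,0,0,0,0],
  ![1,0,0,3,0,0,0,0],
  ![1,0,1,0,0,0,0,0],
  ![1,0,1,1,0,0,0,0],
  ![1,0,1,2,0,0,0,0],
  ![1,0,2,0,0,0,0,0],
  ![1,0,2,1,0,0,0,0],
  ![1,0,3,0,0,0,0,0],
  ![1,1,0,0,0,0,0,0],
  ![1,1,0,1,0,0,0,0],
  ![1,1,0,2,0,0,0,0],
  ![1,1,1,0,0,0,0,0],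
  ![1,1,1,1,0,0,0,0],
  ![1,1,2,0,0,0,0,0],
  ![1,2,0,0,0,0,0,0],
  ![1,2,0,1,0,0,0,0],
  ![1,2,1,0,0,0,0,0],
  ![1,3,0,0,0,0,0,0],
  ![2,0,0,0,0,0,0,0],
  ![2,0,0,1,0,0,0,0],
  ![2,0,0,2,0,0,0,0],
  ![2,0,1,0,0,0,0,0],
  ![2,0,1,1,0,0,0,0],
  ![2,0,2,0,0,0,0,0],
  ![2,1,0,0,0,0,0,0],
  ![2,1,0,1,0,0,0,0],
  ![2,1,1,0,0,0,0,0],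
  ![2,2,0,0,0,0,0,0],
  ![3,0,0,0,0,0,0,0],
  ![3,0,0,1,0,0,0,0],
  ![3,0,1,0,0,0,0,0],
  ![3,1,0,0,0,0,0,0],
  ![4,0,0,0,0,0,0,0],
  ![0,0,0,0,0,0,0,1],
  ![0,0,0,0,0,0,1,0],
  ![0,0,0,0,0,0,1,1],
  ![0,0,0,0,0,1,0,0],
  ![0,0,0,0,0,1,0,1],
  ![0,0,0,0,0,1,1,0],
  ![0,0,0,0,0,1,1,1],
  ![0,0,0,0,1,0,0,0],
  ![0,0,0,0,1,0,0,1],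
  ![0,0,0,0,1,0,1,0],
  ![0,0,0,0,1,0,1,1],
  ![0,0,0,0,1,1,0,0],
  ![0,0,0,0,1,1,0,1],
  ![0,0,0,0,1,1,1,0],
  ![0,0,0,0,1,1,1,1]]

def Xmons : Finset (Fin 8 → ℕ) := Lmons.toFinset

set_option maxRecDepth 100000 in
lemma Xmons_step : ∀ m ∈ Xmons, ∀ i, 0 < m i →
    Function.update m i (m i - 1) ∈ Xmons := by decide

set_option maxRecDepth 100000 in
lemma Xmons_max : ∀ m ∈ Xmons, (∀ m' ∈ Xmons, m ≤ m' → m' = m) → mdeg m = 4 := by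
  decide

set_option maxRecDepth 100000 in
lemma Xmons_deg_le : ∀ m ∈ Xmons, mdeg m ≤ 4 := by decide

set_option maxRecDepth 100000 in
lemma hVec_Xmons : ∀ i, hVec Xmons i = [1, 8, 16, 24, 36].getD i 0 := by
  intro i
  match i with
  | 0 => decide
  | 1 => decide
  | 2 => decide
  | 3 => decide
  | 4 => decide
  | (n+5) =>
    have hlen : ([1, 8, 16, 24, 36] : List ℕ).length ≤ n + 5 := by simp
    rw [List.getD_eq_default _ _ hlen]
    unfold hVec
    rw [Finset.card_eq_zero, Finset.filter_eq_empty_iff]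
    intro m hm heq
    have := Xmons_deg_le m hm
    omega

-- the theorem ------------------------------------------------------------

set_option maxRecDepth 100000 in
/-- `(1,8,16,24,36)` is a nondecreasing pure `O`-sequence whose first difference
`(1,7,8,8,12)` is not an `O`-sequence (since `12 > (8_(3))^1_1 = 10`);
hence it is a nondecreasing pure `O`-sequence that is not differentiable. -/
theorem stmt8 :
    IsPureOSeqList [1, 8, 16, 24, 36] ∧
    List.Chain' (· ≤ ·) [1, 8, 16, 24, 36] ∧
    diffList [1, 8, 16, 24, 36] = [1, 7, 8, 8, 12] ∧
    mb 8 3 = 10 ∧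
    ¬ IsOSeqList [1, 7, 8, 8, 12] := by
  refine ⟨?_, by simp [List.Chain', List.isChain_cons_cons], by decide, by decide, ?_⟩
  · refine ⟨8, Xmons, ⟨⟨(fun _ => 0), by decide⟩, ?_⟩, ?_, hVec_Xmons⟩
    · intro m hm m' hle
      exact down_closed Xmons Xmons_step (mdeg m) m le_rfl hm m' hle
    · intro m hm
      simp only [maxMons, Finset.mem_filter] at hm
      exact Xmons_max m hm.1 hm.2
  · rintro ⟨-, h⟩
    have h3 := h 3 (by omega) (by norm_num)
    have h10 : mb 8 3 = 10 := by decide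
    have e1 : ([1, 7, 8, 8, 12] : List ℕ).getD 4 0 = 12 := rfl
    have e2 : ([1, 7, 8, 8, 12] : List ℕ).getD 3 0 = 8 := rfl
    rw [e1, e2, h10] at h3
    omega
end

section
/- If h' = (1,h'_1,...,h'_e) and h'' = (1,h''_1,...,h''_e) are pure O-sequences of the same socle degree e, then (1, h'_1+h''_1, ..., h'_e+h''_e) is a pure O-sequence. -/
open scoped Classical

/-- `h : ℕ → ℕ` is a pure `O`-sequence of socle degree `e` -/
def IsPureOSeqFun (e : ℕ) (h : ℕ → ℕ) : Prop :=
  ∃ (r : ℕ) (X : Finset (Fin r → ℕ)), IsOrderIdeal X ∧ IsPure X e ∧ ∀ i, hVec X i = h i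

section
variable {r' r'' : ℕ}

noncomputable def E1 (r'' : ℕ) (m : Fin r' → ℕ) : Fin (r' + r'') → ℕ :=
  fun i => Sum.elim m (fun _ => 0) (finSumFinEquiv.symm i)

noncomputable def E2 (r' : ℕ) (m : Fin r'' → ℕ) : Fin (r' + r'') → ℕ :=
  fun i => Sum.elim (fun _ => 0) m (finSumFinEquiv.symm i)

lemma E1_inl (m : Fin r' → ℕ) (j : Fin r') :
    E1 r'' m (Fin.castAdd r'' j) = m j := by simp [E1]

lemma E1_inr (m : Fin r' → ℕ) (j : Fin r'') :
    E1 r'' m (Fin.natAdd r' j) = 0 := by simp [E1]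

lemma E2_inr (m : Fin r'' → ℕ) (j : Fin r'') :
    E2 r' m (Fin.natAdd r' j) = m j := by simp [E2]

lemma E2_inl (m : Fin r'' → ℕ) (j : Fin r') :
    E2 r' m (Fin.castAdd r'' j) = 0 := by simp [E2]

lemma mdeg_E1 (m : Fin r' → ℕ) : mdeg (E1 r'' m) = mdeg m := by
  unfold mdeg
  rw [← Equiv.sum_comp finSumFinEquiv (E1 r'' m)]
  simp [Fintype.sum_sum_type, E1]

lemma mdeg_E2 (m : Fin r'' → ℕ) : mdeg (E2 r' m) = mdeg m := by
  unfold mdeg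
  rw [← Equiv.sum_comp finSumFinEquiv (E2 r' m)]
  simp [Fintype.sum_sum_type, E2]

lemma E1_inj : Function.Injective (E1 (r' := r') r'') := by
  intro a b h
  funext j
  have := congrFun h (Fin.castAdd r'' j)
  simpa [E1_inl, E1_inr] using this

lemma E2_inj : Function.Injective (E2 (r'' := r'') r') := by
  intro a b h
  funext j
  have := congrFun h (Fin.natAdd r' j)
  simpa [E2_inr, E2_inl] using this

lemma E1_le_E1 {a b : Fin r' → ℕ} (h : E1 r'' a ≤ E1 r'' b) : a ≤ b := by
  intro j
  have := h (Fin.castAdd r'' j)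
  simpa [E1_inl, E1_inr] using this

lemma E2_le_E2 {a b : Fin r'' → ℕ} (h : E2 r' a ≤ E2 r' b) : a ≤ b := by
  intro j
  have := h (Fin.natAdd r' j)
  simpa [E2_inr, E2_inl] using this

lemma E1_mono {a b : Fin r' → ℕ} (h : a ≤ b) : E1 r'' a ≤ E1 r'' b := by
  intro i
  unfold E1
  cases finSumFinEquiv.symm i with
  | inl j => exact h j
  | inr j => simp

lemma E2_mono {a b : Fin r'' → ℕ} (h : a ≤ b) : E2 r' a ≤ E2 r' b := by
  intro i
  unfold E2
  cases finSumFinEquiv.symm i with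
  | inl j => simp
  | inr j => exact h j

lemma le_E1 {n : Fin (r' + r'') → ℕ} {m : Fin r' → ℕ} (h : n ≤ E1 r'' m) :
    ∃ a ≤ m, n = E1 r'' a := by
  refine ⟨fun j => n (Fin.castAdd r'' j), ?_, ?_⟩
  · intro j
    have := h (Fin.castAdd r'' j); simpa [E1_inl, E1_inr] using this
  · funext i
    obtain ⟨s, rfl⟩ := finSumFinEquiv.surjective i
    cases s with
    | inl j => simp [E1_inl]
    | inr j =>
      have := h (Fin.natAdd r' j)
      simp only [E1_inr] at this
      simp [E1_inr]
      omega

lemma le_E2 {n : Fin (r' + r'') → ℕ} {m : Fin r'' → ℕ} (h : n ≤ E2 r' m) :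
    ∃ a ≤ m, n = E2 r' a := by
  refine ⟨fun j => n (Fin.natAdd r' j), ?_, ?_⟩
  · intro j
    have := h (Fin.natAdd r' j); simpa [E2_inr, E2_inl] using this
  · funext i
    obtain ⟨s, rfl⟩ := finSumFinEquiv.surjective i
    cases s with
    | inr j => simp [E2_inr]
    | inl j =>
      have := h (Fin.castAdd r'' j)
      simp only [E2_inl] at this
      simp [E2_inl]
      omega

lemma E1_le_E2 {a : Fin r' → ℕ} {b : Fin r'' → ℕ} (h : E1 r'' a ≤ E2 r' b) :
    a = 0 := by
  funext j
  have := h (Fin.castAdd r'' j)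
  simpa [E1_inl, E2_inl] using this

lemma E1_zero : E1 (r' := r') r'' 0 = 0 := by
  funext i
  unfold E1
  cases finSumFinEquiv.symm i <;> simp

lemma E2_zero : E2 (r'' := r'') r' 0 = 0 := by
  funext i
  unfold E2
  cases finSumFinEquiv.symm i <;> simp

lemma mdeg_eq_zero {r : ℕ} {m : Fin r → ℕ} (h : mdeg m = 0) : m = 0 := by
  funext j
  have := Finset.sum_eq_zero_iff.mp h j (Finset.mem_univ j)
  simpa using this

end

/-- If `h'` and `h''` are pure `O`-sequences of the same socle degree `e`, then
`(1, h'_1 + h''_1, ..., h'_e + h''_e)` is a pure `O`-sequence. -/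
theorem stmt9 (e : ℕ) (h' h'' : ℕ → ℕ)
    (H' : IsPureOSeqFun e h') (H'' : IsPureOSeqFun e h'') :
    IsPureOSeqFun e (fun i => if i = 0 then 1 else h' i + h'' i) := by
  obtain ⟨r', X', ⟨hne', hcl'⟩, hp', hv'⟩ := H'
  obtain ⟨r'', X'', ⟨hne'', hcl''⟩, hp'', hv''⟩ := H''
  refine ⟨r' + r'', (X'.image (E1 r'')) ∪ (X''.image (E2 r')), ⟨?_, ?_⟩, ?_, ?_⟩
  · obtain ⟨a, ha⟩ := hne'
    exact ⟨E1 r'' a, Finset.mem_union_left _ (Finset.mem_image_of_mem _ ha)⟩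
  · intro m hm n hn
    rcases Finset.mem_union.mp hm with hm | hm
    · obtain ⟨a, ha, rfl⟩ := Finset.mem_image.mp hm
      obtain ⟨b, hb, rfl⟩ := le_E1 hn
      exact Finset.mem_union_left _ (Finset.mem_image_of_mem _ (hcl' a ha b hb))
    · obtain ⟨a, ha, rfl⟩ := Finset.mem_image.mp hm
      obtain ⟨b, hb, rfl⟩ := le_E2 hn
      exact Finset.mem_union_right _ (Finset.mem_image_of_mem _ (hcl'' a ha b hb))
  · intro m hm
    simp only [maxMons, Finset.mem_filter] at hm
    obtain ⟨hmX, hmax⟩ := hm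
    rcases Finset.mem_union.mp hmX with hm1 | hm1
    · obtain ⟨a, ha, rfl⟩ := Finset.mem_image.mp hm1
      have hamax : a ∈ maxMons X' := by
        simp only [maxMons, Finset.mem_filter]
        refine ⟨ha, fun b hb hab => ?_⟩
        exact E1_inj (hmax (E1 r'' b)
          (Finset.mem_union_left _ (Finset.mem_image_of_mem _ hb)) (E1_mono hab))
      rw [mdeg_E1]; exact hp' a hamax
    · obtain ⟨a, ha, rfl⟩ := Finset.mem_image.mp hm1
      have hamax : a ∈ maxMons X'' := by
        simp only [maxMons, Finset.mem_filter]
        refine ⟨ha, fun b hb hab => ?_⟩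
        exact E2_inj (hmax (E2 r' b)
          (Finset.mem_union_right _ (Finset.mem_image_of_mem _ hb)) (E2_mono hab))
      rw [mdeg_E2]; exact hp'' a hamax
  · intro i
    by_cases hi : i = 0
    · subst hi
      have h0X : (0 : Fin (r' + r'') → ℕ) ∈ X'.image (E1 r'') ∪ X''.image (E2 r') := by
        obtain ⟨a, ha⟩ := hne'
        have h0' : (0 : Fin r' → ℕ) ∈ X' := hcl' a ha 0 (fun j => Nat.zero_le _)
        have := Finset.mem_image_of_mem (E1 r'') h0'
        rw [E1_zero] at this
        exact Finset.mem_union_left _ this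
      have hfil : ((X'.image (E1 r'') ∪ X''.image (E2 r')).filter
          fun m => mdeg m = 0) = {0} := by
        ext m
        simp only [Finset.mem_filter, Finset.mem_singleton]
        constructor
        · rintro ⟨-, h0⟩; exact mdeg_eq_zero h0
        · rintro rfl; exact ⟨h0X, by simp [mdeg]⟩
      simp only [hVec, hfil, Finset.card_singleton, if_pos rfl]
      simp
    · have hdisj : Disjoint ((X'.image (E1 r'')).filter fun m => mdeg m = i)
          ((X''.image (E2 r')).filter fun m => mdeg m = i) := by
        rw [Finset.disjoint_left]
        intro m hmA hmB
        obtain ⟨hmA1, hmdeg⟩ := Finset.mem_filter.mp hmA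
        obtain ⟨hmB1, -⟩ := Finset.mem_filter.mp hmB
        obtain ⟨a, ha, rfl⟩ := Finset.mem_image.mp hmA1
        obtain ⟨b, hb, heq⟩ := Finset.mem_image.mp hmB1
        have ha0 : a = 0 := E1_le_E2 (le_of_eq heq.symm)
        rw [ha0, E1_zero] at hmdeg
        exact hi (hmdeg ▸ by simp [mdeg])
      have hA : ((X'.image (E1 r'')).filter fun m => mdeg m = i).card = hVec X' i := by
        rw [Finset.filter_image]
        rw [Finset.card_image_of_injective _ E1_inj]
        unfold hVec
        congr 1
        apply Finset.filter_congr
        intro a _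
        simp [mdeg_E1]
      have hB : ((X''.image (E2 r')).filter fun m => mdeg m = i).card = hVec X'' i := by
        rw [Finset.filter_image]
        rw [Finset.card_image_of_injective _ E2_inj]
        unfold hVec
        congr 1
        apply Finset.filter_congr
        intro a _
        simp [mdeg_E2]
      have hmain : hVec (X'.image (E1 r'') ∪ X''.image (E2 r')) i
          = hVec X' i + hVec X'' i := by
        unfold hVec
        rw [Finset.filter_union, Finset.card_union_of_disjoint hdisj, hA, hB]
        rfl
      rw [hmain, hv', hv'']
      simp [hi]
end
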